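/- arXiv:2407.11086 — 4 statements merged into one kernel-verified Lean document; each statement's English description precedes it below -/
import Mathlib

section
/- (Equivalence between score matching and conditional score matching, Vincent 2011.) Let n, m be positive integers and let p : ℝⁿ × ℝᵐ → ℝ be a measurable joint probability density with everywhere-positive marginals q(x̃) = ∫ p(x̃, x) dx and p_X(x) = ∫ p(x̃, x) dx̃. Assume that for every x the map x̃ ↦ p(x̃, x) is differentiable, that q is differentiable with ∇q(x̃) = ∫ ∇_{x̃} p(x̃, x) dx for every x̃, and that ∫ ‖∇_{x̃} log q(x̃)‖² q(x̃) dx̃ and ∫∫ ‖∇_{x̃} log p(x̃|x)‖² p(x̃, x) dx dx̃ are finite. Then for every measurable f : ℝⁿ → ℝⁿ with ∫ ‖f(x̃)‖² q(x̃) dx̃ < ∞, the two objectives J₁(f) = ∫ ‖f(x̃) − ∇_{x̃} log q(x̃)‖² q(x̃) dx̃ and J₂(f) = ∫∫ ‖f(x̃) − ∇_{x̃} log p(x̃|x)‖² p(x̃, x) dx dx̃ differ by a constant independent of f; explicitly, J₁(f) − J₂(f) = ∫ ‖∇_{x̃} log q(x̃)‖² q(x̃) dx̃ − ∫∫ ‖∇_{x̃}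 log p(x̃|x)‖² p(x̃, x) dx dx̃. -/
open MeasureTheory RealInnerProductSpace

variable {E : Type*} [NormedAddCommGroup E] [InnerProductSpace ℝ E] [CompleteSpace E]

lemma aux_gradient_log {f : E → ℝ} {x : E} (hf : DifferentiableAt ℝ f x) (hfx : f x ≠ 0) :
    gradient (fun y => Real.log (f y)) x = (f x)⁻¹ • gradient f x := by
  have h : HasFDerivAt (fun y => Real.log (f y)) ((f x)⁻¹ • fderiv ℝ f x) x :=
    (Real.hasDerivAt_log hfx).comp_hasFDerivAt x hf.hasFDerivAt
  simp only [gradient, h.fderiv, _root_.map_smul]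

lemma aux_gradient_div_const {f : E → ℝ} {x : E} (hf : DifferentiableAt ℝ f x) (c : ℝ) :
    gradient (fun y => f y / c) x = c⁻¹ • gradient f x := by
  have h : HasFDerivAt (fun y => f y / c) (c⁻¹ • fderiv ℝ f x) x := by
    simpa [div_eq_inv_mul, smul_smul] using hf.hasFDerivAt.const_mul c⁻¹
  simp only [gradient, h.fderiv, _root_.map_smul]

lemma aux_gradient_min {f : E → ℝ} {x : E} (hmin : ∀ y, f x ≤ f y) :
    gradient f x = 0 := by
  have h : IsLocalMin f x := Filter.Eventually.of_forall hmin
  simp only [gradient, h.fderiv_eq_zero, map_zero]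

lemma aux_gradient_repr {ι : Type*} [Fintype ι] (b : OrthonormalBasis ι ℝ E) (f : E → ℝ) (x : E) :
    gradient f x = ∑ i, (fderiv ℝ f x (b i)) • b i := by
  conv_lhs => rw [← b.sum_repr' (gradient f x)]
  congr 1; ext i
  congr 1
  have : fderiv ℝ f x (b i) = ⟪gradient f x, b i⟫ := by
    simp only [gradient]
    rw [← InnerProductSpace.toDual_apply_apply]
    simp
  rw [this, real_inner_comm]

section Meas
variable {F : Type*} [NormedAddCommGroup F] [InnerProductSpace ℝ F] [CompleteSpace F]
  [MeasurableSpace E] [BorelSpace E] [SecondCountableTopology E] [MeasurableSpace F] [BorelSpace F]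

lemma aux_tendsto_fderiv (p : E → F → ℝ) (hp_diff : ∀ x, Differentiable ℝ (fun xt => p xt x))
    (v : E) (z : E × F) :
    Filter.Tendsto (fun k : ℕ => ((k : ℝ) + 1) * (p (z.1 + ((k : ℝ) + 1)⁻¹ • v) z.2 - p z.1 z.2))
      Filter.atTop (nhds (fderiv ℝ (fun y => p y z.2) z.1 v)) := by
  set D := fderiv ℝ (fun y => p y z.2) z.1 with hDdef
  have hD : HasFDerivAt (fun y => p y z.2) D z.1 := (hp_diff z.2 z.1).hasFDerivAt
  have hline : HasDerivAt (fun t : ℝ => p (z.1 + t • v) z.2) (D v) 0 := by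
    have hf : HasDerivAt (fun t : ℝ => z.1 + t • v) v 0 := by
      simpa using ((hasDerivAt_id (0:ℝ)).smul_const v).const_add z.1
    have hD' : HasFDerivAt (fun y => p y z.2) D (z.1 + (0:ℝ) • v) := by simpa using hD
    have := hD'.comp_hasDerivAt (f := fun t : ℝ => z.1 + t • v) 0 hf
    exact this
  have hslope := hasDerivAt_iff_tendsto_slope.mp hline
  have hu : Filter.Tendsto (fun k : ℕ => ((k : ℝ) + 1)⁻¹) Filter.atTop (nhdsWithin 0 {(0:ℝ)}ᶜ) := by
    rw [nhdsWithin]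
    refine Filter.tendsto_inf.mpr ⟨?_, ?_⟩
    · exact tendsto_one_div_add_atTop_nhds_zero_nat.congr (by intro k; simp [one_div])
    · refine Filter.tendsto_principal.mpr (Filter.Eventually.of_forall fun k => ?_)
      simp only [Set.mem_compl_iff, Set.mem_singleton_iff]
      positivity
  have := hslope.comp hu
  refine this.congr fun k => ?_
  simp only [Function.comp_apply, slope_def_field, div_eq_inv_mul]
  rw [sub_zero, inv_inv]
  simp [mul_comm]

lemma aux_meas_fderiv_apply (p : E → F → ℝ) (hp_meas : Measurable (Function.uncurry p))
    (hp_diff : ∀ x, Differentiable ℝ (fun xt => p xt x)) (v : E) :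
    Measurable (fun z : E × F => fderiv ℝ (fun y => p y z.2) z.1 v) := by
  apply measurable_of_tendsto_metrizable
    (f := fun k : ℕ => fun z : E × F =>
      ((k : ℝ) + 1) * (p (z.1 + ((k : ℝ) + 1)⁻¹ • v) z.2 - p z.1 z.2))
  · intro k
    apply Measurable.mul measurable_const
    apply Measurable.sub
    · exact hp_meas.comp ((measurable_fst.add_const _).prodMk measurable_snd)
    · exact hp_meas.comp (measurable_fst.prodMk measurable_snd)
  · rw [tendsto_pi_nhds]
    exact fun z => aux_tendsto_fderiv p hp_diff v z

lemma aux_meas_gradient {ι : Type*} [Fintype ι] (b : OrthonormalBasis ι ℝ E)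
    (p : E → F → ℝ) (hp_meas : Measurable (Function.uncurry p))
    (hp_diff : ∀ x, Differentiable ℝ (fun xt => p xt x)) :
    Measurable (fun z : E × F => gradient (fun y => p y z.2) z.1) := by
  have : (fun z : E × F => gradient (fun y => p y z.2) z.1)
      = fun z => ∑ i, (fderiv ℝ (fun y => p y z.2) z.1 (b i)) • b i := by
    funext z; exact aux_gradient_repr b _ _
  rw [this]
  exact Finset.measurable_sum _ fun i _ =>
    (aux_meas_fderiv_apply p hp_meas hp_diff (b i)).smul_const (b i)
end Meas

set_option maxHeartbeats 2000000 in

/-- **Equivalence between score matching and conditional score matching (Vincent 2011).**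
For a measurable joint probability density `p` on `ℝⁿ × ℝᵐ` with everywhere-positive
marginals `q(x̃) = ∫ p(x̃, x) dx` and `p_X(x) = ∫ p(x̃, x) dx̃` (here `x̃` is written `xt`),
under differentiability and gradient/integral interchange assumptions and finiteness of
`∫ ‖∇ log q‖² q` and `∫∫ ‖∇_{x̃} log p(x̃|x)‖² p(x̃,x)`, for every measurable
`f : ℝⁿ → ℝⁿ` with `∫ ‖f‖² q < ∞` the objectives
`J₁(f) = ∫ ‖f − ∇ log q‖² q` and `J₂(f) = ∫∫ ‖f − ∇_{x̃} log p(x̃|x)‖² p(x̃,x)`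
satisfy `J₁(f) − J₂(f) = ∫ ‖∇ log q‖² q − ∫∫ ‖∇_{x̃} log p(x̃|x)‖² p(x̃,x)`,
a constant independent of `f`. -/
theorem score_matching_eq_conditional_score_matching
    (n m : ℕ) (hn : 0 < n) (hm : 0 < m)
    (p : EuclideanSpace ℝ (Fin n) → EuclideanSpace ℝ (Fin m) → ℝ)
    (hp_meas : Measurable (Function.uncurry p))
    (hp_nonneg : ∀ xt x, 0 ≤ p xt x)
    (hp_prob : ∫ z : EuclideanSpace ℝ (Fin n) × EuclideanSpace ℝ (Fin m), p z.1 z.2 = 1)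
    (q : EuclideanSpace ℝ (Fin n) → ℝ)
    (hq_def : ∀ xt, q xt = ∫ x, p xt x)
    (pX : EuclideanSpace ℝ (Fin m) → ℝ)
    (hpX_def : ∀ x, pX x = ∫ xt, p xt x)
    (hq_pos : ∀ xt, 0 < q xt) (hpX_pos : ∀ x, 0 < pX x)
    (hp_diff : ∀ x, Differentiable ℝ (fun xt => p xt x))
    (hq_diff : Differentiable ℝ q)
    (hq_grad : ∀ xt, gradient q xt = ∫ x, gradient (fun y => p y x) xt)
    (hfin1 : Integrable (fun xt =>
      ‖gradient (fun y => Real.log (q y)) xt‖ ^ 2 * q xt))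
    (hfin2 : Integrable (fun z : EuclideanSpace ℝ (Fin n) × EuclideanSpace ℝ (Fin m) =>
      ‖gradient (fun y => Real.log (p y z.2 / pX z.2)) z.1‖ ^ 2 * p z.1 z.2)) :
    ∀ f : EuclideanSpace ℝ (Fin n) → EuclideanSpace ℝ (Fin n), Measurable f →
      Integrable (fun xt => ‖f xt‖ ^ 2 * q xt) →
      (∫ xt, ‖f xt - gradient (fun y => Real.log (q y)) xt‖ ^ 2 * q xt) -
        (∫ z : EuclideanSpace ℝ (Fin n) × EuclideanSpace ℝ (Fin m),
          ‖f z.1 - gradient (fun y => Real.log (p y z.2 / pX z.2)) z.1‖ ^ 2 * p z.1 z.2) =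
      (∫ xt, ‖gradient (fun y => Real.log (q y)) xt‖ ^ 2 * q xt) -
        (∫ z : EuclideanSpace ℝ (Fin n) × EuclideanSpace ℝ (Fin m),
          ‖gradient (fun y => Real.log (p y z.2 / pX z.2)) z.1‖ ^ 2 * p z.1 z.2) := by
  intro f hf_meas hf_int
  set g := fun xt => gradient (fun y => Real.log (q y)) xt with hg_def
  set s := fun z : EuclideanSpace ℝ (Fin n) × EuclideanSpace ℝ (Fin m) =>
    gradient (fun y => Real.log (p y z.2 / pX z.2)) z.1 with hs_def
  set G := fun xt => gradient q xt with hG_def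
  set P := fun z : EuclideanSpace ℝ (Fin n) × EuclideanSpace ℝ (Fin m) =>
    gradient (fun y => p y z.2) z.1 with hP_def
  -- pointwise identities
  have hG : ∀ xt, q xt • g xt = G xt := by
    intro xt
    have := aux_gradient_log (f := q) (x := xt) (hq_diff xt) (hq_pos xt).ne'
    rw [hg_def]
    simp only [this, hG_def, smul_smul, mul_inv_cancel₀ (hq_pos xt).ne']
    simp
  have hP : ∀ z, p z.1 z.2 • s z = P z := by
    intro z
    rcases eq_or_lt_of_le (hp_nonneg z.1 z.2) with h0 | hpos
    · have hPz : P z = 0 := aux_gradient_min (fun y => h0 ▸ hp_nonneg y z.2)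
      rw [hPz, ← h0, zero_smul]
    · have hdiff : DifferentiableAt ℝ (fun y => p y z.2 / pX z.2) z.1 := by
        simp only [div_eq_mul_inv]
        exact (hp_diff z.2 z.1).mul_const _
      have hne : p z.1 z.2 / pX z.2 ≠ 0 := div_ne_zero hpos.ne' (hpX_pos z.2).ne'
      have h1 := aux_gradient_log hdiff hne
      have h2 := aux_gradient_div_const ((hp_diff z.2) z.1) (pX z.2)
      rw [hs_def]
      simp only [h1, h2, smul_smul]
      rw [hP_def]
      have hc : p z.1 z.2 * ((p z.1 z.2 / pX z.2)⁻¹ * (pX z.2)⁻¹) = 1 := by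
        field_simp
        exact div_self (hpX_pos z.2).ne'
      rw [hc, one_smul]
  -- measurability
  have hpz_meas : Measurable (fun z : EuclideanSpace ℝ (Fin n) × EuclideanSpace ℝ (Fin m) =>
      p z.1 z.2) := hp_meas
  have hG_meas : Measurable G :=
    ((InnerProductSpace.toDual ℝ (EuclideanSpace ℝ (Fin n))).symm.continuous.measurable).comp
      (measurable_fderiv ℝ q)
  have hg_meas : Measurable g :=
    ((InnerProductSpace.toDual ℝ (EuclideanSpace ℝ (Fin n))).symm.continuous.measurable).comp
      (measurable_fderiv ℝ (fun y => Real.log (q y)))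
  have hP_meas : Measurable P :=
    aux_meas_gradient (EuclideanSpace.basisFun (Fin n) ℝ) p hp_meas hp_diff
  -- integrable slices
  have hpslice : ∀ xt, Integrable (fun x => p xt x) := by
    intro xt
    by_contra hc
    have := integral_undef hc
    rw [← hq_def xt] at this
    exact (hq_pos xt).ne' this
  -- cross term integrable on the first factor
  have I2 : Integrable (fun xt => ⟪f xt, G xt⟫) := by
    have hbound : Integrable (fun xt => 1/2 * (‖f xt‖ ^ 2 * q xt + ‖g xt‖ ^ 2 * q xt)) :=
      (hf_int.add hfin1).const_mul _
    refine Integrable.mono' hbound ((hf_meas.inner hG_meas).aestronglyMeasurable) ?_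
    refine Filter.Eventually.of_forall fun xt => ?_
    have h1 : ⟪f xt, G xt⟫ = q xt * ⟪f xt, g xt⟫ := by
      rw [← hG xt, real_inner_smul_right]
    have h2 : |⟪f xt, g xt⟫| ≤ ‖f xt‖ * ‖g xt‖ := abs_real_inner_le_norm _ _
    have hq := (hq_pos xt).le
    rw [Real.norm_eq_abs, h1, abs_mul, abs_of_nonneg hq]
    nlinarith [mul_le_mul_of_nonneg_left h2 hq, mul_nonneg hq (sq_nonneg (‖f xt‖ - ‖g xt‖)),
      abs_nonneg ⟪f xt, g xt⟫]
  -- product-side integrability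
  have A2meas : Measurable (fun z : EuclideanSpace ℝ (Fin n) × EuclideanSpace ℝ (Fin m) =>
      ‖f z.1‖ ^ 2 * p z.1 z.2) :=
    (((hf_meas.comp measurable_fst).norm.pow_const 2).mul hpz_meas)
  have A2int : Integrable (fun z : EuclideanSpace ℝ (Fin n) × EuclideanSpace ℝ (Fin m) =>
      ‖f z.1‖ ^ 2 * p z.1 z.2) := by
    rw [Measure.volume_eq_prod]
    refine (integrable_prod_iff A2meas.aestronglyMeasurable).2 ⟨?_, ?_⟩
    · refine Filter.Eventually.of_forall fun xt => ?_
      have := (hpslice xt).const_mul (‖f xt‖ ^ 2)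
      simpa using this
    · have heq : (fun xt => ∫ x, ‖‖f xt‖ ^ 2 * p xt x‖) = fun xt => ‖f xt‖ ^ 2 * q xt := by
        funext xt
        calc (∫ x, ‖‖f xt‖ ^ 2 * p xt x‖) = ∫ x, ‖f xt‖ ^ 2 * p xt x := by
              congr 1; funext x
              rw [Real.norm_eq_abs,
                abs_of_nonneg (mul_nonneg (by positivity) (hp_nonneg xt x))]
          _ = ‖f xt‖ ^ 2 * ∫ x, p xt x := integral_const_mul _ _
          _ = ‖f xt‖ ^ 2 * q xt := by rw [hq_def]
      rw [heq]; exact hf_int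
  have hA : (∫ z : EuclideanSpace ℝ (Fin n) × EuclideanSpace ℝ (Fin m),
      ‖f z.1‖ ^ 2 * p z.1 z.2) = ∫ xt, ‖f xt‖ ^ 2 * q xt := by
    rw [Measure.volume_eq_prod,
      integral_prod _ (by rw [← Measure.volume_eq_prod]; exact A2int)]
    refine integral_congr_ae (Filter.Eventually.of_forall fun xt => ?_)
    show (∫ x, ‖f xt‖ ^ 2 * p xt x) = ‖f xt‖ ^ 2 * q xt
    rw [integral_const_mul, ← hq_def]
  have Bmeas : Measurable (fun z : EuclideanSpace ℝ (Fin n) × EuclideanSpace ℝ (Fin m) =>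
      ⟪f z.1, P z⟫) := (hf_meas.comp measurable_fst).inner hP_meas
  have Bint : Integrable (fun z : EuclideanSpace ℝ (Fin n) × EuclideanSpace ℝ (Fin m) =>
      ⟪f z.1, P z⟫) := by
    have hbound : Integrable (fun z : EuclideanSpace ℝ (Fin n) × EuclideanSpace ℝ (Fin m) =>
        1/2 * (‖f z.1‖ ^ 2 * p z.1 z.2 + ‖s z‖ ^ 2 * p z.1 z.2)) :=
      (A2int.add hfin2).const_mul _
    refine Integrable.mono' hbound Bmeas.aestronglyMeasurable ?_
    refine Filter.Eventually.of_forall fun z => ?_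
    have h1 : ⟪f z.1, P z⟫ = p z.1 z.2 * ⟪f z.1, s z⟫ := by
      rw [← hP z, real_inner_smul_right]
    have h2 : |⟪f z.1, s z⟫| ≤ ‖f z.1‖ * ‖s z‖ := abs_real_inner_le_norm _ _
    have hp0 := hp_nonneg z.1 z.2
    rw [Real.norm_eq_abs, h1, abs_mul, abs_of_nonneg hp0]
    nlinarith [mul_le_mul_of_nonneg_left h2 hp0,
      mul_nonneg hp0 (sq_nonneg (‖f z.1‖ - ‖s z‖)), abs_nonneg ⟪f z.1, s z⟫]
  -- cross terms agree
  have hsint : ∀ᵐ xt, Integrable (fun x => ‖s (xt, x)‖ ^ 2 * p xt x) := by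
    have h := hfin2
    rw [Measure.volume_eq_prod] at h
    exact h.prod_right_ae
  have hPint : ∀ᵐ xt, Integrable (fun x => P (xt, x)) := by
    filter_upwards [hsint] with xt hxt
    have hmeas : Measurable (fun x => P (xt, x)) := hP_meas.comp measurable_prodMk_left
    have hb : Integrable (fun x => 1/2 * (p xt x + ‖s (xt, x)‖ ^ 2 * p xt x)) :=
      ((hpslice xt).add hxt).const_mul _
    refine Integrable.mono' hb hmeas.aestronglyMeasurable ?_
    refine Filter.Eventually.of_forall fun x => ?_
    have h1 : P (xt, x) = p xt x • s (xt, x) := (hP (xt, x)).symm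
    rw [h1, norm_smul, Real.norm_eq_abs, abs_of_nonneg (hp_nonneg xt x)]
    nlinarith [hp_nonneg xt x, norm_nonneg (s (xt, x)),
      mul_nonneg (hp_nonneg xt x) (sq_nonneg (1 - ‖s (xt, x)‖))]
  have hB : (∫ z : EuclideanSpace ℝ (Fin n) × EuclideanSpace ℝ (Fin m), ⟪f z.1, P z⟫)
      = ∫ xt, ⟪f xt, G xt⟫ := by
    rw [Measure.volume_eq_prod,
      integral_prod _ (by rw [← Measure.volume_eq_prod]; exact Bint)]
    refine integral_congr_ae ?_
    filter_upwards [hPint] with xt hxt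
    rw [integral_inner hxt (f xt)]
    congr 1
    rw [hG_def]
    simpa using (hq_grad xt).symm
  -- pointwise expansions
  have hexp1 : (fun xt => ‖f xt - g xt‖ ^ 2 * q xt)
      = fun xt => (‖f xt‖ ^ 2 * q xt - 2 * ⟪f xt, G xt⟫) + ‖g xt‖ ^ 2 * q xt := by
    funext xt
    have h2 : ⟪f xt, G xt⟫ = q xt * ⟪f xt, g xt⟫ := by
      rw [← hG xt, real_inner_smul_right]
    rw [norm_sub_sq_real, h2]; ring
  have hexp2 : (fun z : EuclideanSpace ℝ (Fin n) × EuclideanSpace ℝ (Fin m) =>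
      ‖f z.1 - s z‖ ^ 2 * p z.1 z.2)
      = fun z => (‖f z.1‖ ^ 2 * p z.1 z.2 - 2 * ⟪f z.1, P z⟫) + ‖s z‖ ^ 2 * p z.1 z.2 := by
    funext z
    have h2 : ⟪f z.1, P z⟫ = p z.1 z.2 * ⟪f z.1, s z⟫ := by
      rw [← hP z, real_inner_smul_right]
    rw [norm_sub_sq_real, h2]; ring
  have hJ1 : (∫ xt, ‖f xt - g xt‖ ^ 2 * q xt)
      = (∫ xt, ‖f xt‖ ^ 2 * q xt) - 2 * (∫ xt, ⟪f xt, G xt⟫) + ∫ xt, ‖g xt‖ ^ 2 * q xt := by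
    have Isub1 : Integrable (fun xt => ‖f xt‖ ^ 2 * q xt - 2 * ⟪f xt, G xt⟫) :=
      hf_int.sub (I2.const_mul 2)
    rw [hexp1, integral_add Isub1 hfin1, integral_sub hf_int (I2.const_mul 2),
      integral_const_mul]
  have hJ2 : (∫ z : EuclideanSpace ℝ (Fin n) × EuclideanSpace ℝ (Fin m),
        ‖f z.1 - s z‖ ^ 2 * p z.1 z.2)
      = (∫ z : EuclideanSpace ℝ (Fin n) × EuclideanSpace ℝ (Fin m),
          ‖f z.1‖ ^ 2 * p z.1 z.2)
        - 2 * (∫ z : EuclideanSpace ℝ (Fin n) × EuclideanSpace ℝ (Fin m), ⟪f z.1, P z⟫)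
        + ∫ z : EuclideanSpace ℝ (Fin n) × EuclideanSpace ℝ (Fin m),
            ‖s z‖ ^ 2 * p z.1 z.2 := by
    have Isub2 : Integrable (fun z : EuclideanSpace ℝ (Fin n) × EuclideanSpace ℝ (Fin m) =>
        ‖f z.1‖ ^ 2 * p z.1 z.2 - 2 * ⟪f z.1, P z⟫) := A2int.sub (Bint.const_mul 2)
    rw [hexp2, integral_add Isub2 hfin2, integral_sub A2int (Bint.const_mul 2),
      integral_const_mul]
  show (∫ xt, ‖f xt - g xt‖ ^ 2 * q xt)
      - (∫ z : EuclideanSpace ℝ (Fin n) × EuclideanSpace ℝ (Fin m),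
          ‖f z.1 - s z‖ ^ 2 * p z.1 z.2)
      = (∫ xt, ‖g xt‖ ^ 2 * q xt)
      - ∫ z : EuclideanSpace ℝ (Fin n) × EuclideanSpace ℝ (Fin m), ‖s z‖ ^ 2 * p z.1 z.2
  rw [hJ1, hJ2, hA, hB]
  ring
end

section
/- (Theorem 1: Learning forces via fractional denoising.) Let n be a positive integer, τ > 0 and c > 0. Let p_eq be a probability density on ℝⁿ (the distribution of equilibrium conformations), let k(x_m | x_eq) be a conditional probability density (the chemical-aware noise), and let φ_τ(u) = (2πτ²)^{−n/2} exp(−‖u‖²/(2τ²)) (the coordinate Gaussian noise). Define the joint density π(x_eq, x_m, x_f) = p_eq(x_eq) · k(x_m | x_eq) · φ_τ(x_f − x_m) and the marginal q(x_f) = ∫∫ π(x_eq, x_m, x_f) dx_eq dx_m. Assume q is everywhere positive and of Boltzmann form q(x_f) = exp(−E(x_f)/c)/Z for a differentiable E : ℝⁿ → ℝ and normalizing constant Z ∈ (0, ∞), that ∇q(x_f) = ∫∫ ∇_{x_f} π(x_eq, x_m, x_f) dx_eq dx_m for every x_f, and that ∫∫∫ ‖(x_f − x_m)/τ²‖² dπ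 and ∫ ‖∇ log q‖² q are finite. Then for every measurable f : ℝⁿ → ℝⁿ with ∫ ‖f(x_f)‖² q(x_f) dx_f < ∞, the fractional denoising objective equals the force-matching objective up to an additive constant independent of f: ∫ ‖f(x_f) − (x_f − x_m)‖² dπ(x_eq, x_m, x_f) = (τ⁴/c²) ∫ ‖(−c/τ²) f(x_f) − (−∇E(x_f))‖² q(x_f) dx_f + C, where C = τ⁴ ( ∫ ‖(x_f − x_m)/τ²‖² dπ − ∫ ‖∇_{x_f} log q(x_f)‖² q(x_f) dx_f ) does not depend on f. -/
open MeasureTheory Function InnerProductSpace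

section FubiniAux

variable {α β γ : Type*} [MeasureSpace α] [MeasureSpace β] [MeasureSpace γ]
  [SigmaFinite (volume : Measure α)] [SigmaFinite (volume : Measure β)]
  [SigmaFinite (volume : Measure γ)]

lemma frad_tonelli3_base (G : α × β × γ → ENNReal) (hG : Measurable G) :
    ∫⁻ z, G z = ∫⁻ a, ∫⁻ b, ∫⁻ c, G (a, b, c) := by
  rw [Measure.volume_eq_prod, lintegral_prod _ hG.aemeasurable]
  refine lintegral_congr fun a => ?_
  have : Measurable fun p : β × γ => G (a, p) := hG.comp (measurable_const.prodMk measurable_id)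
  rw [Measure.volume_eq_prod, lintegral_prod _ this.aemeasurable]

lemma frad_tonelli3_acb (G : α × β × γ → ENNReal) (hG : Measurable G) :
    ∫⁻ z, G z = ∫⁻ a, ∫⁻ c, ∫⁻ b, G (a, b, c) := by
  rw [frad_tonelli3_base G hG]
  refine lintegral_congr fun a => ?_
  exact lintegral_lintegral_swap ((hG.comp
    (measurable_const.prodMk measurable_id)).aemeasurable)

lemma frad_tonelli3_cab (G : α × β × γ → ENNReal) (hG : Measurable G) :
    ∫⁻ z, G z = ∫⁻ c, ∫⁻ a, ∫⁻ b, G (a, b, c) := by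
  rw [frad_tonelli3_acb G hG]
  refine lintegral_lintegral_swap ?_
  have h1 : Measurable fun p : (α × γ) × β => G (p.1.1, p.2, p.1.2) :=
    hG.comp ((measurable_fst.comp measurable_fst).prodMk
      (measurable_snd.prodMk (measurable_snd.comp measurable_fst)))
  exact (Measurable.lintegral_prod_right
    (f := fun (ac : α × γ) (b : β) => G (ac.1, b, ac.2)) h1).aemeasurable

lemma frad_fubini3_cab (F : α × β × γ → ℝ) (hFm : Measurable F) (hF : Integrable F) :
    ∫ z, F z = ∫ c, ∫ a, ∫ b, F (a, b, c) := by
  have hFprod : Integrable F ((volume : Measure α).prod (volume : Measure (β × γ))) := by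
    rwa [← Measure.volume_eq_prod]
  have hsec : ∀ᵐ a : α, Integrable (fun p : β × γ => F (a, p)) := hFprod.prod_right_ae
  have step1 : ∫ z, F z = ∫ a, ∫ c, ∫ b, F (a, b, c) := by
    rw [Measure.volume_eq_prod, integral_prod _ hFprod]
    refine integral_congr_ae ?_
    filter_upwards [hsec] with a ha
    have ha' : Integrable (uncurry fun b c => F (a, b, c))
        ((volume : Measure β).prod (volume : Measure γ)) := by
      rw [← Measure.volume_eq_prod]; exact ha
    rw [Measure.volume_eq_prod (α := β) (β := γ)]
    exact (integral_prod (fun p : β × γ => F (a, p)) ha').trans (integral_integral_swap ha')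
  rw [step1]
  have hm1 : Measurable fun p : (α × γ) × β => F (p.1.1, p.2, p.1.2) :=
    hFm.comp ((measurable_fst.comp measurable_fst).prodMk
      (measurable_snd.prodMk (measurable_snd.comp measurable_fst)))
  have hsm : StronglyMeasurable fun p : α × γ => ∫ b, F (p.1, b, p.2) :=
    MeasureTheory.StronglyMeasurable.integral_prod_right
      (f := fun (ac : α × γ) (b : β) => F (ac.1, b, ac.2)) hm1.stronglyMeasurable
  refine integral_integral_swap ?_
  refine ⟨hsm.aestronglyMeasurable, ?_⟩
  have hb : ∀ p : α × γ, (‖∫ b, F (p.1, b, p.2)‖₊ : ENNReal) ≤ ∫⁻ b, ‖F (p.1, b, p.2)‖₊ :=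
    fun p => enorm_integral_le_lintegral_enorm _
  calc ∫⁻ p : α × γ, ‖∫ b, F (p.1, b, p.2)‖₊
      ≤ ∫⁻ p : α × γ, ∫⁻ b, ‖F (p.1, b, p.2)‖₊ := lintegral_mono hb
    _ = ∫⁻ a, ∫⁻ c, ∫⁻ b, (‖F (a, b, c)‖₊ : ENNReal) := by
        rw [Measure.volume_eq_prod, lintegral_prod]
        exact (Measurable.lintegral_prod_right
          (f := fun (ac : α × γ) (b : β) => (‖F (ac.1, b, ac.2)‖₊ : ENNReal))
          hm1.enorm).aemeasurable
    _ = ∫⁻ z : α × β × γ, ‖F z‖₊ := (frad_tonelli3_acb _ hFm.enorm).symm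
    _ < ⊤ := hF.2

end FubiniAux

lemma frad_gauss_sup {τ t : ℝ} (hτ : 0 < τ) (ht : 0 ≤ t) :
    t * Real.exp (-t ^ 2 / (2 * τ ^ 2)) ≤ 2 * τ := by
  set u : ℝ := t ^ 2 / (2 * τ ^ 2) with hu
  have hu0 : 0 ≤ u := by positivity
  have hut : t ^ 2 = u * (2 * τ ^ 2) := by rw [hu, div_mul_cancel₀]; positivity
  have harg : -t ^ 2 / (2 * τ ^ 2) = -u := by rw [hu]; ring
  rw [harg]
  set y := Real.exp (-u) with hy
  have hy0 : 0 < y := Real.exp_pos _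
  have hy1 : y ≤ 1 := Real.exp_le_one_iff.mpr (by linarith)
  have key : (u + 1) * y ≤ 1 := by
    have h1 : u + 1 ≤ Real.exp u := by linarith [Real.add_one_le_exp u]
    calc (u + 1) * y ≤ Real.exp u * y := by nlinarith
      _ = 1 := by rw [hy, ← Real.exp_add]; simp
  rcases le_or_gt t (2 * τ) with h | h
  · nlinarith
  · have ht2 : t ^ 2 * y ≤ 2 * τ ^ 2 := by nlinarith
    have h2 : t * (t * y) ≤ t * (2 * τ) := by nlinarith
    exact le_of_mul_le_mul_left h2 (by linarith)

section GaussGrad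

variable {n : ℕ}
local notation "E" => EuclideanSpace ℝ (Fin n)

lemma frad_hasGradientAt_gauss (τ : ℝ) (hτ : τ ≠ 0) (a : ℝ)
    (m x : E) :
    HasGradientAt (fun y : E =>
        a * Real.exp (-‖y - m‖ ^ 2 / (2 * τ ^ 2)))
      ((a * Real.exp (-‖x - m‖ ^ 2 / (2 * τ ^ 2)) * (-(τ ^ 2)⁻¹)) • (x - m)) x := by
  have hτ2 : (τ:ℝ) ^ 2 ≠ 0 := pow_ne_zero _ hτ
  set s : ℝ := -(2 * τ ^ 2)⁻¹ with hs
  have hfun : ∀ y : E, a * Real.exp (-‖y - m‖ ^ 2 / (2 * τ ^ 2))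
      = a * Real.exp (s * (inner ℝ (y - m) (y - m) : ℝ)) := by
    intro y
    rw [real_inner_self_eq_norm_sq]
    congr 1
    congr 1; rw [hs]; ring
  have hid : HasFDerivAt (fun y : E => y - m) (ContinuousLinearMap.id ℝ E) x :=
    (hasFDerivAt_id x).sub_const m
  have h1 : HasFDerivAt (fun y : E => (inner ℝ (y - m) (y - m) : ℝ))
      ((fderivInnerCLM ℝ (x - m, x - m)).comp
        ((ContinuousLinearMap.id ℝ E).prod (ContinuousLinearMap.id ℝ E))) x :=
    hid.inner ℝ hid
  have h2 := (h1.const_mul s).exp.const_mul a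
  have heq : (a • Real.exp (s * (inner ℝ (x - m) (x - m) : ℝ)) •
        (s • ((fderivInnerCLM ℝ ((x : E) - m, x - m)).comp
        ((ContinuousLinearMap.id ℝ E).prod (ContinuousLinearMap.id ℝ E)))))
      = toDual ℝ E ((a * Real.exp (-‖x - m‖ ^ 2 / (2 * τ ^ 2)) * (-(τ ^ 2)⁻¹)) • (x - m)) := by
    ext h
    simp only [ContinuousLinearMap.smul_apply, ContinuousLinearMap.comp_apply,
      ContinuousLinearMap.prod_apply, ContinuousLinearMap.id_apply, fderivInnerCLM_apply,
      toDual_apply_apply, smul_eq_mul]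
    rw [real_inner_smul_left, real_inner_comm h (x - m)]
    have : Real.exp (s * (inner ℝ (x - m) (x - m) : ℝ))
        = Real.exp (-‖x - m‖ ^ 2 / (2 * τ ^ 2)) := by
      rw [real_inner_self_eq_norm_sq]; congr 1; rw [hs]; ring
    rw [this]; ring
  rw [hasGradientAt_iff_hasFDerivAt, ← heq]
  have hfe : (fun y : E => a * Real.exp (-‖y - m‖ ^ 2 / (2 * τ ^ 2)))
      = fun y : E => a * Real.exp (s * (inner ℝ (y - m) (y - m) : ℝ)) := funext hfun
  rw [hfe]
  exact h2

end GaussGrad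

set_option maxHeartbeats 1600000



open MeasureTheory

/-- **Theorem 1: Learning forces via fractional denoising.**
With equilibrium density `p_eq`, chemical-aware conditional noise density `k`, and
coordinate Gaussian noise `φ_τ`, form the joint density
`π(x_eq, x_m, x_f) = p_eq(x_eq) k(x_m|x_eq) φ_τ(x_f − x_m)` and its marginal
`q(x_f) = ∫∫ π dx_eq dx_m`.  If `q` is everywhere positive and of Boltzmann form
`q = exp(−E/c)/Z` with `E` differentiable and `Z ∈ (0, ∞)`, the gradient/integral
interchange holds, and `∫∫∫ ‖(x_f−x_m)/τ²‖² dπ` and `∫ ‖∇ log q‖² q` are finite, then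
for every measurable `f` with `∫ ‖f‖² q < ∞`,
`∫ ‖f(x_f) − (x_f − x_m)‖² dπ
  = (τ⁴/c²) ∫ ‖(−c/τ²) f(x_f) − (−∇E(x_f))‖² q(x_f) dx_f + C` with
`C = τ⁴ (∫ ‖(x_f−x_m)/τ²‖² dπ − ∫ ‖∇ log q‖² q)` independent of `f`. -/
theorem frad_learns_forces (n : ℕ) (hn : 0 < n) (τ c : ℝ) (hτ : 0 < τ) (hc : 0 < c)
    (p_eq : EuclideanSpace ℝ (Fin n) → ℝ)
    (hpeq_meas : Measurable p_eq) (hpeq_nonneg : ∀ x, 0 ≤ p_eq x)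
    (hpeq_prob : ∫ x : EuclideanSpace ℝ (Fin n), p_eq x = 1)
    (k : EuclideanSpace ℝ (Fin n) → EuclideanSpace ℝ (Fin n) → ℝ)
    (hk_meas : Measurable (Function.uncurry k)) (hk_nonneg : ∀ x_eq x_m, 0 ≤ k x_eq x_m)
    (hk_prob : ∀ x_eq, ∫ x_m, k x_eq x_m = 1)
    (φτ : EuclideanSpace ℝ (Fin n) → ℝ)
    (hφτ : ∀ u, φτ u = (2 * Real.pi * τ ^ 2) ^ (-(n : ℝ) / 2) *
      Real.exp (-‖u‖ ^ 2 / (2 * τ ^ 2)))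
    (pj : EuclideanSpace ℝ (Fin n) → EuclideanSpace ℝ (Fin n) →
      EuclideanSpace ℝ (Fin n) → ℝ)
    (hpj : ∀ x_eq x_m x_f, pj x_eq x_m x_f = p_eq x_eq * k x_eq x_m * φτ (x_f - x_m))
    (q : EuclideanSpace ℝ (Fin n) → ℝ)
    (hq_def : ∀ x_f, q x_f = ∫ x_eq, ∫ x_m, pj x_eq x_m x_f)
    (hq_pos : ∀ x_f, 0 < q x_f)
    (En : EuclideanSpace ℝ (Fin n) → ℝ) (hEn : Differentiable ℝ En)
    (Z : ℝ) (hZ : 0 < Z)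
    (hq_boltzmann : ∀ x_f, q x_f = Real.exp (-En x_f / c) / Z)
    (hq_grad : ∀ x_f, gradient q x_f =
      ∫ x_eq, ∫ x_m, gradient (fun y => pj x_eq x_m y) x_f)
    (hfin1 : Integrable (fun z : EuclideanSpace ℝ (Fin n) × EuclideanSpace ℝ (Fin n) ×
        EuclideanSpace ℝ (Fin n) =>
      ‖(τ ^ 2)⁻¹ • (z.2.2 - z.2.1)‖ ^ 2 * pj z.1 z.2.1 z.2.2))
    (hfin2 : Integrable (fun x_f =>
      ‖gradient (fun y => Real.log (q y)) x_f‖ ^ 2 * q x_f)) :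
    ∀ f : EuclideanSpace ℝ (Fin n) → EuclideanSpace ℝ (Fin n), Measurable f →
      Integrable (fun x_f => ‖f x_f‖ ^ 2 * q x_f) →
      (∫ z : EuclideanSpace ℝ (Fin n) × EuclideanSpace ℝ (Fin n) ×
          EuclideanSpace ℝ (Fin n),
        ‖f z.2.2 - (z.2.2 - z.2.1)‖ ^ 2 * pj z.1 z.2.1 z.2.2) =
      (τ ^ 4 / c ^ 2) *
        (∫ x_f, ‖(-(c / τ ^ 2)) • f x_f - (-(gradient En x_f))‖ ^ 2 * q x_f) +
      τ ^ 4 * ((∫ z : EuclideanSpace ℝ (Fin n) × EuclideanSpace ℝ (Fin n) ×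
          EuclideanSpace ℝ (Fin n),
        ‖(τ ^ 2)⁻¹ • (z.2.2 - z.2.1)‖ ^ 2 * pj z.1 z.2.1 z.2.2) -
        ∫ x_f, ‖gradient (fun y => Real.log (q y)) x_f‖ ^ 2 * q x_f) := by
  intro f hf_meas hf_int
  have hτ2 : (0:ℝ) < τ ^ 2 := by positivity
  have hc0 : c ≠ 0 := ne_of_gt hc
  set Cn : ℝ := (2 * Real.pi * τ ^ 2) ^ (-(n : ℝ) / 2) with hCn
  have hCn0 : 0 < Cn := Real.rpow_pos_of_pos (by positivity) _
  -- facts about φτ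
  have hφ_nonneg : ∀ u, 0 ≤ φτ u := fun u => by
    rw [hφτ]; positivity
  have hφ_le : ∀ u, φτ u ≤ Cn := fun u => by
    rw [hφτ]
    calc Cn * Real.exp (-‖u‖ ^ 2 / (2 * τ ^ 2)) ≤ Cn * 1 := by
          gcongr
          exact Real.exp_le_one_iff.mpr
            (div_nonpos_of_nonpos_of_nonneg (neg_nonpos.mpr (by positivity)) (by positivity))
      _ = Cn := mul_one Cn
  have hφ_norm : ∀ u : EuclideanSpace ℝ (Fin n), ‖u‖ * φτ u ≤ Cn * (2 * τ) := fun u => by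
    rw [hφτ]
    calc ‖u‖ * (Cn * Real.exp (-‖u‖ ^ 2 / (2 * τ ^ 2)))
        = Cn * (‖u‖ * Real.exp (-‖u‖ ^ 2 / (2 * τ ^ 2))) := by ring
      _ ≤ Cn * (2 * τ) :=
          mul_le_mul_of_nonneg_left (frad_gauss_sup hτ (norm_nonneg u)) (le_of_lt hCn0)
  have hφ_cont : Continuous φτ := by
    have : φτ = fun u => Cn * Real.exp (-‖u‖ ^ 2 / (2 * τ ^ 2)) := funext hφτ
    rw [this]
    exact continuous_const.mul (Real.continuous_exp.comp
      (((continuous_norm.pow 2).neg).div_const _))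
  have hφ_meas : Measurable φτ := hφ_cont.measurable
  -- integrability of the densities
  have hpeq_int : Integrable p_eq := by
    by_contra hi
    rw [integral_undef hi] at hpeq_prob
    exact one_ne_zero hpeq_prob.symm
  have hk_int : ∀ x_eq, Integrable (k x_eq) := fun x_eq => by
    by_contra hi
    have h := hk_prob x_eq
    rw [integral_undef hi] at h
    exact one_ne_zero h.symm
  have hk_meas' : ∀ x_eq, Measurable (k x_eq) := fun x_eq =>
    hk_meas.comp measurable_prodMk_left
  -- measurability of pj
  have hg_meas : Measurable (fun z : EuclideanSpace ℝ (Fin n) × EuclideanSpace ℝ (Fin n) ×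
      EuclideanSpace ℝ (Fin n) => pj z.1 z.2.1 z.2.2) := by
    have he : (fun z : EuclideanSpace ℝ (Fin n) × EuclideanSpace ℝ (Fin n) ×
        EuclideanSpace ℝ (Fin n) => pj z.1 z.2.1 z.2.2)
        = fun z => p_eq z.1 * k z.1 z.2.1 * φτ (z.2.2 - z.2.1) := funext fun z => hpj _ _ _
    rw [he]
    exact ((hpeq_meas.comp measurable_fst).mul
      (hk_meas.comp (measurable_fst.prodMk (measurable_fst.comp measurable_snd)))).mul
      (hφ_meas.comp ((measurable_snd.comp measurable_snd).sub
        (measurable_fst.comp measurable_snd)))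
  have hpj_m2 : ∀ x_eq x_f, Measurable (fun x_m => pj x_eq x_m x_f) := fun xe xf =>
    hg_meas.comp (measurable_const.prodMk (measurable_id.prodMk measurable_const))
  have hpj_m12 : ∀ x_f, Measurable (fun p : EuclideanSpace ℝ (Fin n) ×
      EuclideanSpace ℝ (Fin n) => pj p.1 p.2 x_f) := fun xf =>
    hg_meas.comp (measurable_fst.prodMk (measurable_snd.prodMk measurable_const))
  have hpj_nonneg : ∀ a b c', 0 ≤ pj a b c' := fun a b c' => by
    rw [hpj]
    exact mul_nonneg (mul_nonneg (hpeq_nonneg a) (hk_nonneg a b)) (hφ_nonneg _)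
  have hpj_le : ∀ a b c', pj a b c' ≤ p_eq a * Cn * k a b := fun a b c' => by
    rw [hpj]
    calc p_eq a * k a b * φτ (c' - b) ≤ p_eq a * k a b * Cn :=
          mul_le_mul_of_nonneg_left (hφ_le _) (mul_nonneg (hpeq_nonneg a) (hk_nonneg a b))
      _ = p_eq a * Cn * k a b := by ring
  have hpj_norm : ∀ a b c', pj a b c' * ‖c' - b‖ ≤ Cn * (2 * τ) * p_eq a * k a b :=
    fun a b c' => by
    rw [hpj]
    calc p_eq a * k a b * φτ (c' - b) * ‖c' - b‖
        = p_eq a * k a b * (‖c' - b‖ * φτ (c' - b)) := by ring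
      _ ≤ p_eq a * k a b * (Cn * (2 * τ)) :=
          mul_le_mul_of_nonneg_left (hφ_norm _) (mul_nonneg (hpeq_nonneg a) (hk_nonneg a b))
      _ = Cn * (2 * τ) * p_eq a * k a b := by ring
  -- integrability of the inner sections
  have hint2 : ∀ x_eq x_f, Integrable (fun x_m => pj x_eq x_m x_f) := fun xe xf => by
    refine Integrable.mono' ((hk_int xe).const_mul (p_eq xe * Cn))
      ((hpj_m2 xe xf).aestronglyMeasurable) (ae_of_all _ fun xm => ?_)
    rw [Real.norm_of_nonneg (hpj_nonneg _ _ _)]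
    calc pj xe xm xf ≤ p_eq xe * Cn * k xe xm := hpj_le _ _ _
      _ = p_eq xe * Cn * k xe xm := rfl
  have hlin : ∀ x_eq x_f, ENNReal.ofReal (∫ x_m, pj x_eq x_m x_f)
      = ∫⁻ x_m, ENNReal.ofReal (pj x_eq x_m x_f) := fun xe xf =>
    ofReal_integral_eq_lintegral_ofReal (hint2 xe xf) (ae_of_all _ fun xm => hpj_nonneg _ _ _)
  have hmid_sm : ∀ x_f, StronglyMeasurable (fun x_eq => ∫ x_m, pj x_eq x_m x_f) := fun xf =>
    MeasureTheory.StronglyMeasurable.integral_prod_right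
      (f := fun a b => pj a b xf) ((hpj_m12 xf).stronglyMeasurable)
  have hmid_le : ∀ x_f x_eq, ∫ x_m, pj x_eq x_m x_f ≤ Cn * p_eq x_eq := fun xf xe => by
    calc ∫ x_m, pj xe x_m xf ≤ ∫ x_m, p_eq xe * Cn * k xe x_m :=
          integral_mono (hint2 xe xf) ((hk_int xe).const_mul _) (fun xm => hpj_le xe xm xf)
      _ = p_eq xe * Cn * ∫ x_m, k xe x_m := integral_const_mul _ _
      _ = Cn * p_eq xe := by rw [hk_prob xe]; ring
  have hmid_int : ∀ x_f, Integrable (fun x_eq => ∫ x_m, pj x_eq x_m x_f) := fun xf => by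
    refine Integrable.mono' (hpeq_int.const_mul Cn)
      ((hmid_sm xf).aestronglyMeasurable) (ae_of_all _ fun xe => ?_)
    rw [Real.norm_of_nonneg (integral_nonneg fun xm => hpj_nonneg _ _ _)]
    exact hmid_le xf xe
  have hq_lint : ∀ x_f, ENNReal.ofReal (q x_f)
      = ∫⁻ x_eq, ∫⁻ x_m, ENNReal.ofReal (pj x_eq x_m x_f) := fun xf => by
    rw [hq_def xf, ofReal_integral_eq_lintegral_ofReal (hmid_int xf)
      (ae_of_all _ fun xe => integral_nonneg fun xm => hpj_nonneg _ _ _)]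
    exact lintegral_congr fun xe => hlin xe xf
  -- Tonelli for weights depending only on x_f
  have hWton : ∀ w : EuclideanSpace ℝ (Fin n) → ℝ, Measurable w → (∀ x, 0 ≤ w x) →
      ∫⁻ z : EuclideanSpace ℝ (Fin n) × EuclideanSpace ℝ (Fin n) × EuclideanSpace ℝ (Fin n),
        ENNReal.ofReal (w z.2.2 * pj z.1 z.2.1 z.2.2)
      = ∫⁻ x_f, ENNReal.ofReal (w x_f * q x_f) := by
    intro w hw hw0
    have hWm : Measurable fun z : EuclideanSpace ℝ (Fin n) × EuclideanSpace ℝ (Fin n) ×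
        EuclideanSpace ℝ (Fin n) => ENNReal.ofReal (w z.2.2 * pj z.1 z.2.1 z.2.2) :=
      ((hw.comp (measurable_snd.comp measurable_snd)).mul hg_meas).ennreal_ofReal
    rw [frad_tonelli3_cab _ hWm]
    refine lintegral_congr fun xf => ?_
    have he : ∀ a b, ENNReal.ofReal (w xf * pj a b xf)
        = ENNReal.ofReal (w xf) * ENNReal.ofReal (pj a b xf) := fun a b =>
      ENNReal.ofReal_mul (hw0 xf)
    simp only [he]
    rw [lintegral_congr fun a => lintegral_const_mul
      (f := fun b => ENNReal.ofReal (pj a b xf)) _ (hpj_m2 a xf).ennreal_ofReal]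
    rw [lintegral_const_mul
      (f := fun a => ∫⁻ b, ENNReal.ofReal (pj a b xf)) _
      (Measurable.lintegral_prod_right
        (f := fun a b => ENNReal.ofReal (pj a b xf)) (hpj_m12 xf).ennreal_ofReal)]
    rw [← hq_lint xf, ← ENNReal.ofReal_mul (hw0 xf)]
  -- continuity / measurability of q and gradient En
  have hq_fun : q = fun y => Real.exp (-En y / c) * Z⁻¹ := funext fun y => by
    rw [hq_boltzmann y, div_eq_mul_inv]
  have hq_cont : Continuous q := by
    rw [hq_fun]
    exact (Real.continuous_exp.comp ((hEn.continuous.neg).div_const c)).mul continuous_const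
  have hq_meas : Measurable q := hq_cont.measurable
  have hgradEn_meas : Measurable (gradient En) := by
    unfold gradient
    exact (LinearIsometryEquiv.continuous _).measurable.comp (measurable_fderiv ℝ En)
  -- T1 : the ‖f‖² term
  have hT1m : Measurable (fun z : EuclideanSpace ℝ (Fin n) × EuclideanSpace ℝ (Fin n) ×
      EuclideanSpace ℝ (Fin n) => ‖f z.2.2‖ ^ 2 * pj z.1 z.2.1 z.2.2) :=
    (((hf_meas.comp (measurable_snd.comp measurable_snd)).norm.pow_const 2).mul hg_meas)
  have hT1nonneg : ∀ z : EuclideanSpace ℝ (Fin n) × EuclideanSpace ℝ (Fin n) ×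
      EuclideanSpace ℝ (Fin n), 0 ≤ ‖f z.2.2‖ ^ 2 * pj z.1 z.2.1 z.2.2 := fun z =>
    mul_nonneg (by positivity) (hpj_nonneg _ _ _)
  have hT1lin : ∫⁻ z : EuclideanSpace ℝ (Fin n) × EuclideanSpace ℝ (Fin n) ×
      EuclideanSpace ℝ (Fin n), ENNReal.ofReal (‖f z.2.2‖ ^ 2 * pj z.1 z.2.1 z.2.2)
      = ∫⁻ x_f, ENNReal.ofReal (‖f x_f‖ ^ 2 * q x_f) :=
    hWton (fun x => ‖f x‖ ^ 2) (hf_meas.norm.pow_const 2) (fun x => by positivity)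
  have hT1_int : Integrable (fun z : EuclideanSpace ℝ (Fin n) × EuclideanSpace ℝ (Fin n) ×
      EuclideanSpace ℝ (Fin n) => ‖f z.2.2‖ ^ 2 * pj z.1 z.2.1 z.2.2) := by
    refine ⟨hT1m.aestronglyMeasurable, ?_⟩
    rw [hasFiniteIntegral_iff_ofReal (ae_of_all _ hT1nonneg), hT1lin]
    exact (hasFiniteIntegral_iff_ofReal (ae_of_all _ fun x =>
      mul_nonneg (by positivity) (le_of_lt (hq_pos x)))).mp hf_int.2
  have hT1_val : ∫ z : EuclideanSpace ℝ (Fin n) × EuclideanSpace ℝ (Fin n) ×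
      EuclideanSpace ℝ (Fin n), ‖f z.2.2‖ ^ 2 * pj z.1 z.2.1 z.2.2
      = ∫ x_f, ‖f x_f‖ ^ 2 * q x_f := by
    rw [integral_eq_lintegral_of_nonneg_ae (ae_of_all _ hT1nonneg) hT1m.aestronglyMeasurable,
      hT1lin, ← integral_eq_lintegral_of_nonneg_ae (ae_of_all _ fun x =>
        mul_nonneg (by positivity) (le_of_lt (hq_pos x)))
        ((hf_meas.norm.pow_const 2).mul hq_meas).aestronglyMeasurable]
  -- T3 pointwise identity
  have hT3_eq : ∀ z : EuclideanSpace ℝ (Fin n) × EuclideanSpace ℝ (Fin n) ×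
      EuclideanSpace ℝ (Fin n), ‖z.2.2 - z.2.1‖ ^ 2 * pj z.1 z.2.1 z.2.2
      = τ ^ 4 * (‖(τ ^ 2)⁻¹ • (z.2.2 - z.2.1)‖ ^ 2 * pj z.1 z.2.1 z.2.2) := fun z => by
    rw [norm_smul, Real.norm_eq_abs, abs_inv, abs_of_pos hτ2]
    field_simp
  -- T2 : the cross term
  have hT2m : Measurable (fun z : EuclideanSpace ℝ (Fin n) × EuclideanSpace ℝ (Fin n) ×
      EuclideanSpace ℝ (Fin n) =>
      (inner ℝ (f z.2.2) (z.2.2 - z.2.1) : ℝ) * pj z.1 z.2.1 z.2.2) :=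
    ((Measurable.inner (𝕜 := ℝ) (hf_meas.comp (measurable_snd.comp measurable_snd))
      ((measurable_snd.comp measurable_snd).sub (measurable_fst.comp measurable_snd))).mul
      hg_meas)
  have hT2_int : Integrable (fun z : EuclideanSpace ℝ (Fin n) × EuclideanSpace ℝ (Fin n) ×
      EuclideanSpace ℝ (Fin n) =>
      (inner ℝ (f z.2.2) (z.2.2 - z.2.1) : ℝ) * pj z.1 z.2.1 z.2.2) := by
    refine Integrable.mono' ((hT1_int.const_mul 2⁻¹).add (hfin1.const_mul (2⁻¹ * τ ^ 4)))
      hT2m.aestronglyMeasurable (ae_of_all _ fun z => ?_)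
    have h1 : |(inner ℝ (f z.2.2) (z.2.2 - z.2.1) : ℝ)| ≤ ‖f z.2.2‖ * ‖z.2.2 - z.2.1‖ :=
      abs_real_inner_le_norm _ _
    have h2 : ‖z.2.2 - z.2.1‖ ^ 2 * pj z.1 z.2.1 z.2.2
        = τ ^ 4 * (‖(τ ^ 2)⁻¹ • (z.2.2 - z.2.1)‖ ^ 2 * pj z.1 z.2.1 z.2.2) := hT3_eq z
    have h3 : 0 ≤ pj z.1 z.2.1 z.2.2 := hpj_nonneg _ _ _
    simp only [Pi.add_apply]
    rw [Real.norm_eq_abs, abs_mul, abs_of_nonneg h3]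
    have h4 : |(inner ℝ (f z.2.2) (z.2.2 - z.2.1) : ℝ)| * pj z.1 z.2.1 z.2.2
        ≤ (‖f z.2.2‖ * ‖z.2.2 - z.2.1‖) * pj z.1 z.2.1 z.2.2 :=
      mul_le_mul_of_nonneg_right h1 h3
    refine h4.trans ?_
    have h5 : (‖f z.2.2‖ * ‖z.2.2 - z.2.1‖) * pj z.1 z.2.1 z.2.2
        ≤ 2⁻¹ * (‖f z.2.2‖ ^ 2 * pj z.1 z.2.1 z.2.2)
          + 2⁻¹ * (‖z.2.2 - z.2.1‖ ^ 2 * pj z.1 z.2.1 z.2.2) := by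
      nlinarith [sq_nonneg (‖f z.2.2‖ - ‖z.2.2 - z.2.1‖), h3,
        mul_nonneg (mul_nonneg (norm_nonneg (f z.2.2)) (norm_nonneg (z.2.2 - z.2.1))) h3]
    refine h5.trans ?_
    rw [h2]
    linarith [h5]
  -- Fubini for the cross term
  have hFub : ∫ z : EuclideanSpace ℝ (Fin n) × EuclideanSpace ℝ (Fin n) ×
      EuclideanSpace ℝ (Fin n), (inner ℝ (f z.2.2) (z.2.2 - z.2.1) : ℝ) * pj z.1 z.2.1 z.2.2
      = ∫ x_f, ∫ x_eq, ∫ x_m, (inner ℝ (f x_f) (x_f - x_m) : ℝ) * pj x_eq x_m x_f :=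
    frad_fubini3_cab _ hT2m hT2_int
  -- vector-valued inner integrals
  have hwv_meas : ∀ (x_eq x_f : EuclideanSpace ℝ (Fin n)),
      Measurable (fun x_m => pj x_eq x_m x_f • (x_f - x_m)) := fun xe xf =>
    Measurable.smul (hpj_m2 xe xf) (measurable_const.sub measurable_id)
  have hwv_int : ∀ (x_eq x_f : EuclideanSpace ℝ (Fin n)),
      Integrable (fun x_m => pj x_eq x_m x_f • (x_f - x_m)) := fun xe xf => by
    refine Integrable.mono' ((hk_int xe).const_mul (Cn * (2 * τ) * p_eq xe))
      ((hwv_meas xe xf).aestronglyMeasurable) (ae_of_all _ fun xm => ?_)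
    rw [norm_smul, Real.norm_eq_abs, abs_of_nonneg (hpj_nonneg _ _ _)]
    exact hpj_norm xe xm xf
  have hWYsm : ∀ x_f : EuclideanSpace ℝ (Fin n),
      StronglyMeasurable (fun x_eq => ∫ x_m, pj x_eq x_m x_f • (x_f - x_m)) := fun xf =>
    MeasureTheory.StronglyMeasurable.integral_prod_right
      (f := fun a b => pj a b xf • (xf - b))
      ((Measurable.smul (hpj_m12 xf) (measurable_const.sub measurable_snd)).stronglyMeasurable)
  have hWY_int : ∀ x_f : EuclideanSpace ℝ (Fin n),
      Integrable (fun x_eq => ∫ x_m, pj x_eq x_m x_f • (x_f - x_m)) := fun xf => by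
    refine Integrable.mono' (hpeq_int.const_mul (Cn * (2 * τ)))
      ((hWYsm xf).aestronglyMeasurable) (ae_of_all _ fun xe => ?_)
    calc ‖∫ x_m, pj xe x_m xf • (xf - x_m)‖
        ≤ ∫ x_m, ‖pj xe x_m xf • (xf - x_m)‖ := norm_integral_le_integral_norm _
      _ ≤ ∫ x_m, Cn * (2 * τ) * p_eq xe * k xe x_m := by
          refine integral_mono ((hwv_int xe xf).norm) ((hk_int xe).const_mul _) fun xm => ?_
          rw [norm_smul, Real.norm_eq_abs, abs_of_nonneg (hpj_nonneg _ _ _)]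
          exact hpj_norm xe xm xf
      _ = Cn * (2 * τ) * p_eq xe := by rw [integral_const_mul, hk_prob xe, mul_one]
  -- gradient of the sections of pj
  have hgrad_pj : ∀ (x_eq x_m y : EuclideanSpace ℝ (Fin n)),
      gradient (fun y' => pj x_eq x_m y') y
        = (-(τ ^ 2)⁻¹ * pj x_eq x_m y) • (y - x_m) := fun xe xm y => by
    have hfeq : (fun y' => pj xe xm y') = fun y' : EuclideanSpace ℝ (Fin n) =>
        (p_eq xe * k xe xm * Cn) * Real.exp (-‖y' - xm‖ ^ 2 / (2 * τ ^ 2)) :=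
      funext fun y' => by rw [hpj, hφτ]; ring
    rw [hfeq, (frad_hasGradientAt_gauss τ (ne_of_gt hτ) (p_eq xe * k xe xm * Cn) xm y).gradient]
    congr 1
    rw [hpj, hφτ]
    ring
  -- the vector integral V equals -τ² ∇q
  have hV : ∀ x_f : EuclideanSpace ℝ (Fin n),
      (∫ x_eq, ∫ x_m, pj x_eq x_m x_f • (x_f - x_m))
        = (-(τ ^ 2) : ℝ) • gradient q x_f := fun xf => by
    have h1 : gradient q xf = ∫ x_eq, ∫ x_m, (-(τ ^ 2)⁻¹ * pj x_eq x_m xf) • (xf - x_m) := by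
      rw [hq_grad xf]
      simp only [hgrad_pj]
    have h2 : ∀ xe : EuclideanSpace ℝ (Fin n),
        (∫ x_m, (-(τ ^ 2)⁻¹ * pj xe x_m xf) • (xf - x_m))
          = (-(τ ^ 2)⁻¹ : ℝ) • ∫ x_m, pj xe x_m xf • (xf - x_m) := fun xe => by
      simp_rw [mul_smul]
      exact integral_smul _ _
    have h3 : gradient q xf = (-(τ ^ 2)⁻¹ : ℝ) • ∫ x_eq, ∫ x_m, pj x_eq x_m xf • (xf - x_m) := by
      rw [h1]
      simp only [h2]
      exact integral_smul _ _
    rw [h3, smul_smul]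
    have h4 : (-(τ ^ 2) : ℝ) * (-(τ ^ 2)⁻¹) = 1 := by field_simp
    rw [h4, one_smul]
  -- gradients from the Boltzmann form
  have hgradlog : ∀ x, gradient (fun y => Real.log (q y)) x = (-c⁻¹ : ℝ) • gradient En x := by
    intro x
    have hlog : (fun y => Real.log (q y))
        = fun y => (-c⁻¹) * En y - Real.log Z := funext fun y => by
      rw [hq_boltzmann y, Real.log_div (Real.exp_ne_zero _) (ne_of_gt hZ), Real.log_exp]
      ring
    rw [hlog]
    have h1 : HasFDerivAt En (toDual ℝ _ (gradient En x)) x := (hEn x).hasGradientAt.hasFDerivAt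
    have h2 := (h1.const_mul (-c⁻¹)).sub_const (Real.log Z)
    have h3 : HasGradientAt (fun y => (-c⁻¹) * En y - Real.log Z)
        ((-c⁻¹ : ℝ) • gradient En x) x := by
      rw [hasGradientAt_iff_hasFDerivAt, _root_.map_smul]
      exact h2
    exact h3.gradient
  have hgradq : ∀ x, gradient q x = (-c⁻¹ * q x) • gradient En x := by
    intro x
    have h1 : HasFDerivAt En (toDual ℝ _ (gradient En x)) x := (hEn x).hasGradientAt.hasFDerivAt
    have h2 : HasFDerivAt (fun y => Real.exp (-En y / c))
        (Real.exp (-En x / c) • ((-c⁻¹ : ℝ) • toDual ℝ _ (gradient En x))) x := by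
      have he : (fun y => -En y / c) = fun y => (-c⁻¹) * En y := funext fun y => by ring
      have h2' : HasFDerivAt (fun y => -En y / c)
          ((-c⁻¹ : ℝ) • toDual ℝ _ (gradient En x)) x := by
        rw [he]; exact h1.const_mul _
      exact h2'.exp
    have h3 := h2.mul_const Z⁻¹
    rw [smul_smul, smul_smul] at h3
    have h4 : HasGradientAt (fun y => Real.exp (-En y / c) * Z⁻¹)
        ((-c⁻¹ * (Real.exp (-En x / c) * Z⁻¹)) • gradient En x) x := by
      rw [hasGradientAt_iff_hasFDerivAt, _root_.map_smul]
      have hsc : (-c⁻¹ * (Real.exp (-En x / c) * Z⁻¹))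
          = Z⁻¹ * Real.exp (-En x / c) * -c⁻¹ := by ring
      rw [hsc]
      exact h3
    have h5 := h4.gradient
    rw [hq_fun]
    rw [h5]
  -- the cross term value
  have hJ : (∫ z : EuclideanSpace ℝ (Fin n) × EuclideanSpace ℝ (Fin n) ×
        EuclideanSpace ℝ (Fin n),
        (inner ℝ (f z.2.2) (z.2.2 - z.2.1) : ℝ) * pj z.1 z.2.1 z.2.2)
      = (τ ^ 2 / c) * ∫ x_f, (inner ℝ (f x_f) (gradient En x_f) : ℝ) * q x_f := by
    rw [hFub]
    have key : ∀ x_f : EuclideanSpace ℝ (Fin n),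
        (∫ x_eq, ∫ x_m, (inner ℝ (f x_f) (x_f - x_m) : ℝ) * pj x_eq x_m x_f)
          = (τ ^ 2 / c) * ((inner ℝ (f x_f) (gradient En x_f) : ℝ) * q x_f) := by
      intro xf
      have e1 : ∀ (xe xm : EuclideanSpace ℝ (Fin n)),
          (inner ℝ (f xf) (xf - xm) : ℝ) * pj xe xm xf
            = (inner ℝ (f xf) (pj xe xm xf • (xf - xm)) : ℝ) := fun xe xm => by
        rw [real_inner_smul_right]; ring
      simp only [e1]
      have e2 : ∀ xe : EuclideanSpace ℝ (Fin n),
          (∫ x_m, (inner ℝ (f xf) (pj xe x_m xf • (xf - x_m)) : ℝ))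
            = (inner ℝ (f xf) (∫ x_m, pj xe x_m xf • (xf - x_m)) : ℝ) := fun xe =>
        (innerSL ℝ (f xf)).integral_comp_comm (hwv_int xe xf)
      simp only [e2]
      have e3 : (∫ x_eq, (inner ℝ (f xf) (∫ x_m, pj x_eq x_m xf • (xf - x_m)) : ℝ))
          = (inner ℝ (f xf) (∫ x_eq, ∫ x_m, pj x_eq x_m xf • (xf - x_m)) : ℝ) :=
        (innerSL ℝ (f xf)).integral_comp_comm (hWY_int xf)
      rw [e3, hV xf, hgradq xf, smul_smul, real_inner_smul_right]
      field_simp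
    simp only [key]
    exact integral_const_mul _ _
  -- integrability of the force-matching pieces
  have hJ3_int : Integrable (fun x => ‖gradient En x‖ ^ 2 * q x) := by
    have e : ∀ x, (c ^ 2) * (‖gradient (fun y => Real.log (q y)) x‖ ^ 2 * q x)
        = ‖gradient En x‖ ^ 2 * q x := fun x => by
      rw [hgradlog x, norm_smul, Real.norm_eq_abs, abs_neg, abs_inv, abs_of_pos hc]
      field_simp
    exact (hfin2.const_mul (c ^ 2)).congr (ae_of_all _ e)
  have hlog_val : ∫ x_f, ‖gradient (fun y => Real.log (q y)) x_f‖ ^ 2 * q x_f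
      = (c ^ 2)⁻¹ * ∫ x_f, ‖gradient En x_f‖ ^ 2 * q x_f := by
    have e : ∀ x, ‖gradient (fun y => Real.log (q y)) x‖ ^ 2 * q x
        = (c ^ 2)⁻¹ * (‖gradient En x‖ ^ 2 * q x) := fun x => by
      rw [hgradlog x, norm_smul, Real.norm_eq_abs, abs_neg, abs_inv, abs_of_pos hc]
      field_simp
    simp only [e]
    exact integral_const_mul _ _
  have hJ2_int : Integrable (fun x => (inner ℝ (f x) (gradient En x) : ℝ) * q x) := by
    refine Integrable.mono' ((hf_int.const_mul 2⁻¹).add (hJ3_int.const_mul 2⁻¹))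
      (((Measurable.inner (𝕜 := ℝ) hf_meas hgradEn_meas).mul hq_meas).aestronglyMeasurable)
      (ae_of_all _ fun x => ?_)
    simp only [Pi.add_apply]
    have h1 : |(inner ℝ (f x) (gradient En x) : ℝ)| ≤ ‖f x‖ * ‖gradient En x‖ :=
      abs_real_inner_le_norm _ _
    have hq0 : 0 ≤ q x := le_of_lt (hq_pos x)
    rw [Real.norm_eq_abs, abs_mul, abs_of_nonneg hq0]
    have h2 : |(inner ℝ (f x) (gradient En x) : ℝ)| * q x ≤ (‖f x‖ * ‖gradient En x‖) * q x :=
      mul_le_mul_of_nonneg_right h1 hq0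
    refine h2.trans ?_
    nlinarith [sq_nonneg (‖f x‖ - ‖gradient En x‖), hq0,
      mul_nonneg (mul_nonneg (norm_nonneg (f x)) (norm_nonneg (gradient En x))) hq0]
  -- expansion of the force-matching integral
  have hRHS : ∫ x_f, ‖(-(c / τ ^ 2)) • f x_f - (-(gradient En x_f))‖ ^ 2 * q x_f
      = (c ^ 2 / τ ^ 4) * (∫ x_f, ‖f x_f‖ ^ 2 * q x_f)
        - 2 * (c / τ ^ 2) * (∫ x_f, (inner ℝ (f x_f) (gradient En x_f) : ℝ) * q x_f)
        + ∫ x_f, ‖gradient En x_f‖ ^ 2 * q x_f := by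
    have e : ∀ x, ‖(-(c / τ ^ 2)) • f x - (-(gradient En x))‖ ^ 2 * q x
        = ((c ^ 2 / τ ^ 4) * (‖f x‖ ^ 2 * q x)
          - 2 * (c / τ ^ 2) * ((inner ℝ (f x) (gradient En x) : ℝ) * q x))
          + ‖gradient En x‖ ^ 2 * q x := fun x => by
      rw [norm_sub_sq_real, norm_smul, norm_neg, real_inner_smul_left, inner_neg_right,
        Real.norm_eq_abs, mul_pow, sq_abs]
      field_simp
      rw [norm_neg]; ring
    simp only [e]
    have ha : Integrable (fun x => (c ^ 2 / τ ^ 4) * (‖f x‖ ^ 2 * q x)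
        - 2 * (c / τ ^ 2) * ((inner ℝ (f x) (gradient En x) : ℝ) * q x)) :=
      (hf_int.const_mul _).sub (hJ2_int.const_mul _)
    rw [integral_add ha hJ3_int,
      integral_sub (hf_int.const_mul ((c : ℝ) ^ 2 / τ ^ 4))
        (hJ2_int.const_mul (2 * (c / τ ^ 2))),
      integral_const_mul, integral_const_mul]
  -- expansion of the denoising integral
  have hLHS : (∫ z : EuclideanSpace ℝ (Fin n) × EuclideanSpace ℝ (Fin n) ×
        EuclideanSpace ℝ (Fin n), ‖f z.2.2 - (z.2.2 - z.2.1)‖ ^ 2 * pj z.1 z.2.1 z.2.2)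
      = (∫ z : EuclideanSpace ℝ (Fin n) × EuclideanSpace ℝ (Fin n) ×
          EuclideanSpace ℝ (Fin n), ‖f z.2.2‖ ^ 2 * pj z.1 z.2.1 z.2.2)
        - 2 * (∫ z : EuclideanSpace ℝ (Fin n) × EuclideanSpace ℝ (Fin n) ×
          EuclideanSpace ℝ (Fin n), (inner ℝ (f z.2.2) (z.2.2 - z.2.1) : ℝ) * pj z.1 z.2.1 z.2.2)
        + τ ^ 4 * (∫ z : EuclideanSpace ℝ (Fin n) × EuclideanSpace ℝ (Fin n) ×
          EuclideanSpace ℝ (Fin n), ‖(τ ^ 2)⁻¹ • (z.2.2 - z.2.1)‖ ^ 2 * pj z.1 z.2.1 z.2.2) := by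
    have e : ∀ z : EuclideanSpace ℝ (Fin n) × EuclideanSpace ℝ (Fin n) ×
        EuclideanSpace ℝ (Fin n), ‖f z.2.2 - (z.2.2 - z.2.1)‖ ^ 2 * pj z.1 z.2.1 z.2.2
        = (‖f z.2.2‖ ^ 2 * pj z.1 z.2.1 z.2.2
            - 2 * ((inner ℝ (f z.2.2) (z.2.2 - z.2.1) : ℝ) * pj z.1 z.2.1 z.2.2))
          + τ ^ 4 * (‖(τ ^ 2)⁻¹ • (z.2.2 - z.2.1)‖ ^ 2 * pj z.1 z.2.1 z.2.2) := fun z => by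
      rw [norm_sub_sq_real]
      linear_combination hT3_eq z
    simp only [e]
    have ha : Integrable (fun z : EuclideanSpace ℝ (Fin n) × EuclideanSpace ℝ (Fin n) ×
        EuclideanSpace ℝ (Fin n) => ‖f z.2.2‖ ^ 2 * pj z.1 z.2.1 z.2.2
          - 2 * ((inner ℝ (f z.2.2) (z.2.2 - z.2.1) : ℝ) * pj z.1 z.2.1 z.2.2)) :=
      hT1_int.sub (hT2_int.const_mul 2)
    rw [integral_add ha (hfin1.const_mul (τ ^ 4)),
      integral_sub hT1_int (hT2_int.const_mul 2), integral_const_mul, integral_const_mul]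
  -- final assembly
  rw [hLHS, hT1_val, hJ, hRHS, hlog_val]
  have hτ0 : τ ≠ 0 := ne_of_gt hτ
  field_simp
  ring
end

section
/- (Theorem 2: Learning forces via coordinate denoising.) Let n be a positive integer, τ > 0 and c > 0. Let p_eq be a probability density on ℝⁿ and φ_τ(u) = (2πτ²)^{−n/2} exp(−‖u‖²/(2τ²)). Define the joint density π(x_eq, x_f) = p_eq(x_eq) · φ_τ(x_f − x_eq) and the marginal q(x_f) = ∫ π(x_eq, x_f) dx_eq. Assume q is everywhere positive and of Boltzmann form q(x_f) = exp(−E(x_f)/c)/Z for a differentiable E : ℝⁿ → ℝ and normalizing constant Z ∈ (0, ∞), that ∇q(x_f) = ∫ ∇_{x_f} π(x_eq, x_f) dx_eq for every x_f, and that ∫∫ ‖(x_f − x_eq)/τ²‖² dπ and ∫ ‖∇ log q‖² q are finite. Then for every measurable f : ℝⁿ → ℝⁿ with ∫ ‖f(x_f)‖² q(x_f) dx_f < ∞: ∫ ‖f(x_f) − (x_f − x_eq)‖² dπ(x_eq, x_f) = (τ⁴/c²) ∫ ‖(−c/τ²) f(x_f) − (−∇E(x_f))‖² q(x_f) dx_f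 + C, where C = τ⁴ ( ∫ ‖(x_f − x_eq)/τ²‖² dπ − ∫ ‖∇_{x_f} log q(x_f)‖² q(x_f) dx_f ) does not depend on f. -/
open MeasureTheory InnerProductSpace RealInnerProductSpace

variable {F : Type*} [NormedAddCommGroup F] [InnerProductSpace ℝ F] [CompleteSpace F]

lemma auxGradOfFDeriv {f : F → ℝ} {L : F →L[ℝ] ℝ} {v x : F} (h : HasFDerivAt f L x)
    (hL : ∀ y, L y = inner ℝ v y) : HasGradientAt f v x := by
  rw [hasGradientAt_iff_hasFDerivAt]
  have : (toDual ℝ F) v = L := by ext y; simp [hL y]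
  rwa [this]

lemma auxGradSmul {f : F → ℝ} {v x : F} (a : ℝ) (h : HasGradientAt f v x) :
    HasGradientAt (fun y => a * f y) (a • v) x := by
  refine auxGradOfFDeriv (h.hasFDerivAt.const_mul a) fun y => ?_
  simp [real_inner_smul_left, toDual_apply_apply]

lemma auxGradExp {f : F → ℝ} {v x : F} (h : HasGradientAt f v x) :
    HasGradientAt (fun y => Real.exp (f y)) (Real.exp (f x) • v) x := by
  refine auxGradOfFDeriv h.hasFDerivAt.exp fun y => ?_
  simp [real_inner_smul_left, toDual_apply_apply]

lemma auxGradSubConst {f : F → ℝ} {v x : F} (b : ℝ) (h : HasGradientAt f v x) :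
    HasGradientAt (fun y => f y - b) v x := by
  refine auxGradOfFDeriv (h.hasFDerivAt.sub_const b) fun y => ?_
  simp [toDual_apply_apply]

lemma auxGradNormSq (w x : F) :
    HasGradientAt (fun y : F => ‖y - w‖ ^ 2) ((2 : ℝ) • (x - w)) x := by
  have h0 : HasFDerivAt (fun y : F => y - w) (ContinuousLinearMap.id ℝ F) x :=
    (hasFDerivAt_id x).sub_const w
  have h1 := (h0.inner ℝ h0)
  have h2 : (fun y : F => ‖y - w‖ ^ 2) = fun y : F => (inner ℝ (y - w) (y - w) : ℝ) := by
    funext y; rw [real_inner_self_eq_norm_sq]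
  rw [h2]
  refine auxGradOfFDeriv h1 fun y => ?_
  simp [fderivInnerCLM_apply, real_inner_smul_left, real_inner_smul_right, real_inner_comm]
  ring

lemma auxGradGauss {a b : ℝ} (w x : F) :
    HasGradientAt (fun y : F => a * Real.exp (-‖y - w‖ ^ 2 / b))
      ((a * Real.exp (-‖x - w‖ ^ 2 / b) * (-2 / b)) • (x - w)) x := by
  have h1 : HasGradientAt (fun y : F => -b⁻¹ * ‖y - w‖ ^ 2)
      ((-b⁻¹) • ((2 : ℝ) • (x - w))) x := auxGradSmul _ (auxGradNormSq w x)
  have h2 := auxGradSmul a (auxGradExp h1)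
  have h3 : (fun y : F => a * Real.exp (-b⁻¹ * ‖y - w‖ ^ 2))
      = fun y : F => a * Real.exp (-‖y - w‖ ^ 2 / b) := by
    funext y; congr 1; ring_nf
  rw [h3] at h2
  have harg : -‖x - w‖ ^ 2 / b = -b⁻¹ * ‖x - w‖ ^ 2 := by ring
  convert h2 using 1
  rw [smul_smul, smul_smul, smul_smul, harg]
  congr 1; ring

set_option maxHeartbeats 1000000 in
/-- **Theorem 2: Learning forces via coordinate denoising.**
With equilibrium density `p_eq` and coordinate Gaussian noise `φ_τ`, form the joint
density `π(x_eq, x_f) = p_eq(x_eq) φ_τ(x_f − x_eq)` and its marginal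
`q(x_f) = ∫ π dx_eq`.  If `q` is everywhere positive and of Boltzmann form
`q = exp(−E/c)/Z` with `E` differentiable and `Z ∈ (0, ∞)`, the gradient/integral
interchange holds, and `∫∫ ‖(x_f−x_eq)/τ²‖² dπ` and `∫ ‖∇ log q‖² q` are finite, then
for every measurable `f` with `∫ ‖f‖² q < ∞`,
`∫ ‖f(x_f) − (x_f − x_eq)‖² dπ
  = (τ⁴/c²) ∫ ‖(−c/τ²) f(x_f) − (−∇E(x_f))‖² q(x_f) dx_f + C` with
`C = τ⁴ (∫ ‖(x_f−x_eq)/τ²‖² dπ − ∫ ‖∇ log q‖² q)` independent of `f`. -/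
theorem coordinate_denoising_learns_forces
    (n : ℕ) (hn : 0 < n) (τ c : ℝ) (hτ : 0 < τ) (hc : 0 < c)
    (p_eq : EuclideanSpace ℝ (Fin n) → ℝ)
    (hpeq_meas : Measurable p_eq) (hpeq_nonneg : ∀ x, 0 ≤ p_eq x)
    (hpeq_prob : ∫ x : EuclideanSpace ℝ (Fin n), p_eq x = 1)
    (φτ : EuclideanSpace ℝ (Fin n) → ℝ)
    (hφτ : ∀ u, φτ u = (2 * Real.pi * τ ^ 2) ^ (-(n : ℝ) / 2) *
      Real.exp (-‖u‖ ^ 2 / (2 * τ ^ 2)))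
    (pj : EuclideanSpace ℝ (Fin n) → EuclideanSpace ℝ (Fin n) → ℝ)
    (hpj : ∀ x_eq x_f, pj x_eq x_f = p_eq x_eq * φτ (x_f - x_eq))
    (q : EuclideanSpace ℝ (Fin n) → ℝ)
    (hq_def : ∀ x_f, q x_f = ∫ x_eq, pj x_eq x_f)
    (hq_pos : ∀ x_f, 0 < q x_f)
    (En : EuclideanSpace ℝ (Fin n) → ℝ) (hEn : Differentiable ℝ En)
    (Z : ℝ) (hZ : 0 < Z)
    (hq_boltzmann : ∀ x_f, q x_f = Real.exp (-En x_f / c) / Z)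
    (hq_grad : ∀ x_f, gradient q x_f = ∫ x_eq, gradient (fun y => pj x_eq y) x_f)
    (hfin1 : Integrable (fun z : EuclideanSpace ℝ (Fin n) × EuclideanSpace ℝ (Fin n) =>
      ‖(τ ^ 2)⁻¹ • (z.2 - z.1)‖ ^ 2 * pj z.1 z.2))
    (hfin2 : Integrable (fun x_f =>
      ‖gradient (fun y => Real.log (q y)) x_f‖ ^ 2 * q x_f)) :
    ∀ f : EuclideanSpace ℝ (Fin n) → EuclideanSpace ℝ (Fin n), Measurable f →
      Integrable (fun x_f => ‖f x_f‖ ^ 2 * q x_f) →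
      (∫ z : EuclideanSpace ℝ (Fin n) × EuclideanSpace ℝ (Fin n),
        ‖f z.2 - (z.2 - z.1)‖ ^ 2 * pj z.1 z.2) =
      (τ ^ 4 / c ^ 2) *
        (∫ x_f, ‖(-(c / τ ^ 2)) • f x_f - (-(gradient En x_f))‖ ^ 2 * q x_f) +
      τ ^ 4 * ((∫ z : EuclideanSpace ℝ (Fin n) × EuclideanSpace ℝ (Fin n),
        ‖(τ ^ 2)⁻¹ • (z.2 - z.1)‖ ^ 2 * pj z.1 z.2) -
        ∫ x_f, ‖gradient (fun y => Real.log (q y)) x_f‖ ^ 2 * q x_f) := by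
  intro f hfm hfq
  set g : EuclideanSpace ℝ (Fin n) → EuclideanSpace ℝ (Fin n) := gradient (fun y => Real.log (q y)) with hgdef
  have hτ2 : (τ ^ 2 : ℝ) ≠ 0 := by positivity
  have hc0 : (c : ℝ) ≠ 0 := ne_of_gt hc
  -- basic properties of pj
  have hpj0 : ∀ x₁ x₂ : EuclideanSpace ℝ (Fin n), 0 ≤ pj x₁ x₂ := by
    intro x₁ x₂; rw [hpj, hφτ]
    exact mul_nonneg (hpeq_nonneg _) (by positivity)
  have hφc : Continuous φτ := by
    have : φτ = fun u => (2 * Real.pi * τ ^ 2) ^ (-(n : ℝ) / 2) *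
        Real.exp (-‖u‖ ^ 2 / (2 * τ ^ 2)) := funext hφτ
    rw [this]
    exact continuous_const.mul (Real.continuous_exp.comp
      (((continuous_norm.pow 2).neg).div_const _))
  have hpjm : Measurable (fun z : EuclideanSpace ℝ (Fin n) × EuclideanSpace ℝ (Fin n) => pj z.1 z.2) := by
    have : (fun z : EuclideanSpace ℝ (Fin n) × EuclideanSpace ℝ (Fin n) => pj z.1 z.2)
        = fun z : EuclideanSpace ℝ (Fin n) × EuclideanSpace ℝ (Fin n) => p_eq z.1 * φτ (z.2 - z.1) := by
      funext z; rw [hpj]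
    rw [this]
    exact (hpeq_meas.comp measurable_fst).mul
      (hφc.measurable.comp (measurable_snd.sub measurable_fst))
  have hpj1 : ∀ x₂ : EuclideanSpace ℝ (Fin n), Measurable fun x₁ => pj x₁ x₂ := fun x₂ =>
    hpjm.comp (measurable_id.prodMk measurable_const)
  have hpj_int : ∀ x₂ : EuclideanSpace ℝ (Fin n), Integrable fun x₁ => pj x₁ x₂ := by
    intro x₂
    by_contra h
    have h0 := integral_undef h
    have := hq_pos x₂
    rw [hq_def x₂, h0] at this
    exact lt_irrefl 0 this
  -- gradients
  have hlog : (fun y => Real.log (q y)) = fun y => (-c⁻¹) * En y - Real.log Z := by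
    funext y
    rw [hq_boltzmann y, Real.log_div (Real.exp_ne_zero _) (ne_of_gt hZ), Real.log_exp]
    ring
  have hgE : ∀ x : EuclideanSpace ℝ (Fin n), g x = (-c⁻¹) • gradient En x := by
    intro x
    rw [hgdef, hlog]
    exact (auxGradSubConst _ (auxGradSmul _ (hEn x).hasGradientAt)).gradient
  have hqfun : q = fun y => Z⁻¹ * Real.exp (-c⁻¹ * En y) := by
    funext y
    rw [hq_boltzmann y, show -En y / c = -c⁻¹ * En y from by ring, div_eq_inv_mul]
  have hgradq : ∀ x : EuclideanSpace ℝ (Fin n), gradient q x = q x • g x := by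
    intro x
    rw [hqfun, hgE x]
    rw [(auxGradSmul Z⁻¹ (auxGradExp (auxGradSmul (-c⁻¹) (hEn x).hasGradientAt))).gradient]
    rw [smul_smul, smul_smul]
  have hgradpj : ∀ x₁ x₂ : EuclideanSpace ℝ (Fin n),
      gradient (fun y => pj x₁ y) x₂ = (-(τ^2)⁻¹) • (pj x₁ x₂ • (x₂ - x₁)) := by
    intro x₁ x₂
    have hfun : (fun y => pj x₁ y) = fun y =>
        (p_eq x₁ * (2 * Real.pi * τ ^ 2) ^ (-(n : ℝ) / 2)) *
          Real.exp (-‖y - x₁‖ ^ 2 / (2 * τ ^ 2)) := by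
      funext y; rw [hpj, hφτ]; ring
    rw [hfun, (auxGradGauss x₁ x₂).gradient, smul_smul]
    congr 1
    rw [hpj, hφτ]
    field_simp
  have hV : ∀ x₂ : EuclideanSpace ℝ (Fin n), (∫ x₁, pj x₁ x₂ • (x₂ - x₁)) = (-(τ^2)) • (q x₂ • g x₂) := by
    intro x₂
    have h1 : gradient q x₂ = (-(τ^2)⁻¹) • ∫ x₁, pj x₁ x₂ • (x₂ - x₁) := by
      rw [hq_grad x₂]
      simp_rw [hgradpj]
      rw [integral_smul]
    have h2 : (-(τ^2)⁻¹ : ℝ) • (∫ x₁, pj x₁ x₂ • (x₂ - x₁)) = q x₂ • g x₂ := by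
      rw [← h1, hgradq x₂]
    calc (∫ x₁, pj x₁ x₂ • (x₂ - x₁))
        = (-(τ^2) : ℝ) • ((-(τ^2)⁻¹ : ℝ) • ∫ x₁, pj x₁ x₂ • (x₂ - x₁)) := by
          rw [smul_smul, show (-(τ^2) : ℝ) * (-(τ^2)⁻¹) = 1 from by field_simp, one_smul]
      _ = (-(τ^2) : ℝ) • (q x₂ • g x₂) := by rw [h2]
  -- measurability of q and g
  have hqm : Measurable q := by
    rw [hqfun]
    exact (continuous_const.mul (Real.continuous_exp.comp
      (continuous_const.mul hEn.continuous))).measurable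
  have hgradEm : Measurable (gradient En) := by
    have : Measurable (fderiv ℝ En) := measurable_fderiv ℝ En
    exact ((toDual ℝ (EuclideanSpace ℝ (Fin n))).symm.continuous.measurable).comp this
  have hgm : Measurable g := by
    have : g = fun x => (-c⁻¹) • gradient En x := funext hgE
    rw [this]
    exact hgradEm.const_smul (-c⁻¹)
  -- marginalization lemma
  have hq_nn : ∀ x : EuclideanSpace ℝ (Fin n), 0 ≤ q x := fun x => (hq_pos x).le
  have marg : ∀ gg : EuclideanSpace ℝ (Fin n) → ℝ, Measurable gg → (∀ x, 0 ≤ gg x) →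
      Integrable (fun x => gg x * q x) →
      Integrable (fun z : EuclideanSpace ℝ (Fin n) × EuclideanSpace ℝ (Fin n) => gg z.2 * pj z.1 z.2) ∧
      (∫ z : EuclideanSpace ℝ (Fin n) × EuclideanSpace ℝ (Fin n), gg z.2 * pj z.1 z.2) = ∫ x, gg x * q x := by
    intro gg hgm2 hg0 hgq
    have hm : Measurable fun z : EuclideanSpace ℝ (Fin n) × EuclideanSpace ℝ (Fin n) => gg z.2 * pj z.1 z.2 :=
      (hgm2.comp measurable_snd).mul hpjm
    have hnn : ∀ z : EuclideanSpace ℝ (Fin n) × EuclideanSpace ℝ (Fin n), 0 ≤ gg z.2 * pj z.1 z.2 :=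
      fun z => mul_nonneg (hg0 _) (hpj0 _ _)
    have hlin : (∫⁻ z : EuclideanSpace ℝ (Fin n) × EuclideanSpace ℝ (Fin n), ENNReal.ofReal (gg z.2 * pj z.1 z.2))
        = ENNReal.ofReal (∫ x, gg x * q x) := by
      have hm2 : Measurable fun z : EuclideanSpace ℝ (Fin n) × EuclideanSpace ℝ (Fin n) =>
          ENNReal.ofReal (gg z.2 * pj z.1 z.2) := ENNReal.measurable_ofReal.comp hm
      rw [Measure.volume_eq_prod, lintegral_prod_symm _ hm2.aemeasurable]
      have hin : ∀ x₂ : EuclideanSpace ℝ (Fin n), (∫⁻ x₁, ENNReal.ofReal (gg x₂ * pj x₁ x₂))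
          = ENNReal.ofReal (gg x₂ * q x₂) := by
        intro x₂
        calc (∫⁻ x₁, ENNReal.ofReal (gg x₂ * pj x₁ x₂))
            = ∫⁻ x₁, ENNReal.ofReal (gg x₂) * ENNReal.ofReal (pj x₁ x₂) := by
              simp_rw [ENNReal.ofReal_mul (hg0 x₂)]
          _ = ENNReal.ofReal (gg x₂) * ∫⁻ x₁, ENNReal.ofReal (pj x₁ x₂) :=
              lintegral_const_mul _ (ENNReal.measurable_ofReal.comp (hpj1 x₂))
          _ = ENNReal.ofReal (gg x₂) * ENNReal.ofReal (q x₂) := by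
              rw [hq_def x₂, ofReal_integral_eq_lintegral_ofReal (hpj_int x₂)
                (Filter.Eventually.of_forall fun x₁ => hpj0 x₁ x₂)]
          _ = ENNReal.ofReal (gg x₂ * q x₂) := (ENNReal.ofReal_mul (hg0 x₂)).symm
      have step1 : (∫⁻ x₂, ∫⁻ x₁, ENNReal.ofReal (gg x₂ * pj x₁ x₂))
          = ∫⁻ x₂, ENNReal.ofReal (gg x₂ * q x₂) := lintegral_congr hin
      have step2 : (∫⁻ x₂, ENNReal.ofReal (gg x₂ * q x₂))
          = ENNReal.ofReal (∫ x, gg x * q x) :=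
        (ofReal_integral_eq_lintegral_ofReal hgq
          (Filter.Eventually.of_forall fun x => mul_nonneg (hg0 x) (hq_nn x))).symm
      exact step1.trans step2
    have hint : Integrable (fun z : EuclideanSpace ℝ (Fin n) × EuclideanSpace ℝ (Fin n) => gg z.2 * pj z.1 z.2) := by
      refine ⟨hm.aestronglyMeasurable, ?_⟩
      rw [hasFiniteIntegral_iff_ofReal (Filter.Eventually.of_forall hnn), hlin]
      exact ENNReal.ofReal_lt_top
    refine ⟨hint, ?_⟩
    rw [integral_eq_lintegral_of_nonneg_ae (Filter.Eventually.of_forall hnn)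
      hm.aestronglyMeasurable, hlin,
      ENNReal.toReal_ofReal (integral_nonneg fun x => mul_nonneg (hg0 x) (hq_nn x))]
  obtain ⟨i_prod_fsq, hA⟩ := marg (fun x => ‖f x‖ ^ 2) (hfm.norm.pow_const 2)
    (fun x => sq_nonneg _) hfq
  -- the ε² term
  have hsc : ∀ u : EuclideanSpace ℝ (Fin n), τ ^ 4 * (‖(τ ^ 2)⁻¹ • u‖ ^ 2) = ‖u‖ ^ 2 := by
    intro u
    rw [norm_smul, Real.norm_eq_abs, abs_inv, abs_of_pos (by positivity : (0:ℝ) < τ ^ 2)]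
    field_simp
  have heq : (fun z : EuclideanSpace ℝ (Fin n) × EuclideanSpace ℝ (Fin n) => τ ^ 4 * (‖(τ ^ 2)⁻¹ • (z.2 - z.1)‖ ^ 2 * pj z.1 z.2))
      = fun z : EuclideanSpace ℝ (Fin n) × EuclideanSpace ℝ (Fin n) => ‖z.2 - z.1‖ ^ 2 * pj z.1 z.2 := by
    funext z
    rw [← mul_assoc, ← hsc (z.2 - z.1)]
  have i_prod_eps : Integrable (fun z : EuclideanSpace ℝ (Fin n) × EuclideanSpace ℝ (Fin n) => ‖z.2 - z.1‖ ^ 2 * pj z.1 z.2) := by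
    have := hfin1.const_mul (τ ^ 4)
    rwa [heq] at this
  have hBB' : (∫ z : EuclideanSpace ℝ (Fin n) × EuclideanSpace ℝ (Fin n), ‖z.2 - z.1‖ ^ 2 * pj z.1 z.2)
      = τ ^ 4 * ∫ z : EuclideanSpace ℝ (Fin n) × EuclideanSpace ℝ (Fin n), ‖(τ ^ 2)⁻¹ • (z.2 - z.1)‖ ^ 2 * pj z.1 z.2 := by
    rw [← integral_const_mul, heq]
  -- cross term on product space
  have hcross_meas : Measurable fun z : EuclideanSpace ℝ (Fin n) × EuclideanSpace ℝ (Fin n) => ⟪f z.2, z.2 - z.1⟫_ℝ * pj z.1 z.2 :=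
    ((hfm.comp measurable_snd).inner (measurable_snd.sub measurable_fst)).mul hpjm
  have i_prod_cross : Integrable (fun z : EuclideanSpace ℝ (Fin n) × EuclideanSpace ℝ (Fin n) => ⟪f z.2, z.2 - z.1⟫_ℝ * pj z.1 z.2) := by
    refine Integrable.mono' (i_prod_fsq.add i_prod_eps) hcross_meas.aestronglyMeasurable
      (Filter.Eventually.of_forall fun z => ?_)
    simp only [Pi.add_apply]
    rw [Real.norm_eq_abs, abs_mul, abs_of_nonneg (hpj0 _ _)]
    have h1 : |⟪f z.2, z.2 - z.1⟫_ℝ| ≤ ‖f z.2‖ * ‖z.2 - z.1‖ := abs_real_inner_le_norm _ _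
    nlinarith [mul_nonneg (sq_nonneg (‖f z.2‖ - ‖z.2 - z.1‖)) (hpj0 z.1 z.2),
      mul_le_mul_of_nonneg_right h1 (hpj0 z.1 z.2),
      mul_nonneg (mul_nonneg (norm_nonneg (f z.2)) (norm_nonneg (z.2 - z.1))) (hpj0 z.1 z.2)]
  -- the key identity
  have hI : (∫ z : EuclideanSpace ℝ (Fin n) × EuclideanSpace ℝ (Fin n), ⟪f z.2, z.2 - z.1⟫_ℝ * pj z.1 z.2)
      = -(τ ^ 2) * ∫ x, ⟪f x, g x⟫_ℝ * q x := by
    have hps : Integrable (fun z : EuclideanSpace ℝ (Fin n) × EuclideanSpace ℝ (Fin n) => ⟪f z.2, z.2 - z.1⟫_ℝ * pj z.1 z.2)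
        ((volume : Measure (EuclideanSpace ℝ (Fin n))).prod volume) := by
      rw [← Measure.volume_eq_prod]; exact i_prod_cross
    have hfin1' : ∀ᵐ x₂ : EuclideanSpace ℝ (Fin n), Integrable fun x₁ =>
        ‖(τ ^ 2)⁻¹ • (x₂ - x₁)‖ ^ 2 * pj x₁ x₂ := by
      have h := (Measure.volume_eq_prod (EuclideanSpace ℝ (Fin n)) (EuclideanSpace ℝ (Fin n))) ▸ hfin1
      exact h.prod_left_ae
    have hae : ∀ᵐ x₂ : EuclideanSpace ℝ (Fin n), (∫ x₁, ⟪f x₂, x₂ - x₁⟫_ℝ * pj x₁ x₂)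
        = -(τ ^ 2) * (⟪f x₂, g x₂⟫_ℝ * q x₂) := by
      filter_upwards [hfin1'] with x₂ hx₂
      have hsq : Integrable fun x₁ => ‖x₂ - x₁‖ ^ 2 * pj x₁ x₂ := by
        have h4 := hx₂.const_mul (τ ^ 4)
        have heq2 : (fun x₁ => τ ^ 4 * (‖(τ ^ 2)⁻¹ • (x₂ - x₁)‖ ^ 2 * pj x₁ x₂))
            = fun x₁ => ‖x₂ - x₁‖ ^ 2 * pj x₁ x₂ := by
          funext x₁
          rw [← mul_assoc, ← hsc (x₂ - x₁)]
        rwa [heq2] at h4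
      have hvec : Integrable fun x₁ => pj x₁ x₂ • (x₂ - x₁) := by
        refine Integrable.mono' ((hpj_int x₂).add hsq)
          ((hpj1 x₂).smul (measurable_const.sub measurable_id)).aestronglyMeasurable
          (Filter.Eventually.of_forall fun x₁ => ?_)
        simp only [Pi.add_apply]
        rw [norm_smul, Real.norm_eq_abs, abs_of_nonneg (hpj0 _ _)]
        have ht : ‖x₂ - x₁‖ ≤ 1 + ‖x₂ - x₁‖ ^ 2 := by
          nlinarith [sq_nonneg (‖x₂ - x₁‖ - 1), norm_nonneg (x₂ - x₁)]
        calc pj x₁ x₂ * ‖x₂ - x₁‖ ≤ pj x₁ x₂ * (1 + ‖x₂ - x₁‖ ^ 2) :=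
              mul_le_mul_of_nonneg_left ht (hpj0 _ _)
          _ = pj x₁ x₂ + ‖x₂ - x₁‖ ^ 2 * pj x₁ x₂ := by ring
      calc (∫ x₁, ⟪f x₂, x₂ - x₁⟫_ℝ * pj x₁ x₂)
          = ∫ x₁, ⟪f x₂, pj x₁ x₂ • (x₂ - x₁)⟫_ℝ := by
            congr 1; funext x₁; rw [real_inner_smul_right]; ring
        _ = ⟪f x₂, ∫ x₁, pj x₁ x₂ • (x₂ - x₁)⟫_ℝ := integral_inner hvec (f x₂)
        _ = ⟪f x₂, (-(τ ^ 2) : ℝ) • (q x₂ • g x₂)⟫_ℝ := by rw [hV x₂]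
        _ = -(τ ^ 2) * (⟪f x₂, g x₂⟫_ℝ * q x₂) := by
            rw [real_inner_smul_right, real_inner_smul_right]; ring
    rw [Measure.volume_eq_prod, integral_prod_symm _ hps]
    exact (integral_congr_ae hae).trans (integral_const_mul _ _)
  -- cross term integrability on the q side
  have i_cross_q : Integrable fun x => ⟪f x, g x⟫_ℝ * q x := by
    refine Integrable.mono' (hfq.add hfin2) ((hfm.inner hgm).mul hqm).aestronglyMeasurable
      (Filter.Eventually.of_forall fun x => ?_)
    simp only [Pi.add_apply]
    rw [Real.norm_eq_abs, abs_mul, abs_of_nonneg (hq_nn _)]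
    have h1 : |⟪f x, g x⟫_ℝ| ≤ ‖f x‖ * ‖g x‖ := abs_real_inner_le_norm _ _
    nlinarith [mul_nonneg (sq_nonneg (‖f x‖ - ‖g x‖)) (hq_nn x),
      mul_le_mul_of_nonneg_right h1 (hq_nn x),
      mul_nonneg (mul_nonneg (norm_nonneg (f x)) (norm_nonneg (g x))) (hq_nn x)]
  -- expand the LHS
  have hLfun : (fun z : EuclideanSpace ℝ (Fin n) × EuclideanSpace ℝ (Fin n) => ‖f z.2 - (z.2 - z.1)‖ ^ 2 * pj z.1 z.2)
      = fun z : EuclideanSpace ℝ (Fin n) × EuclideanSpace ℝ (Fin n) => (‖f z.2‖ ^ 2 * pj z.1 z.2 + ‖z.2 - z.1‖ ^ 2 * pj z.1 z.2) +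
          (-2) * (⟪f z.2, z.2 - z.1⟫_ℝ * pj z.1 z.2) := by
    funext z
    rw [norm_sub_sq_real]
    ring
  have hL : (∫ z : EuclideanSpace ℝ (Fin n) × EuclideanSpace ℝ (Fin n), ‖f z.2 - (z.2 - z.1)‖ ^ 2 * pj z.1 z.2)
      = ((∫ x, ‖f x‖ ^ 2 * q x) +
          τ ^ 4 * ∫ z : EuclideanSpace ℝ (Fin n) × EuclideanSpace ℝ (Fin n), ‖(τ ^ 2)⁻¹ • (z.2 - z.1)‖ ^ 2 * pj z.1 z.2) +
        (-2) * (-(τ ^ 2) * ∫ x, ⟪f x, g x⟫_ℝ * q x) := by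
    have iAB : Integrable (fun z : EuclideanSpace ℝ (Fin n) × EuclideanSpace ℝ (Fin n) =>
        ‖f z.2‖ ^ 2 * pj z.1 z.2 + ‖z.2 - z.1‖ ^ 2 * pj z.1 z.2) := i_prod_fsq.add i_prod_eps
    have iC : Integrable (fun z : EuclideanSpace ℝ (Fin n) × EuclideanSpace ℝ (Fin n) =>
        (-2 : ℝ) * (⟪f z.2, z.2 - z.1⟫_ℝ * pj z.1 z.2)) := i_prod_cross.const_mul _
    rw [hLfun, integral_add iAB iC, integral_add i_prod_fsq i_prod_eps,
      integral_const_mul, hA, hBB', hI]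
  -- expand the RHS integrand
  have hRfun : (fun x : EuclideanSpace ℝ (Fin n) => ‖(-(c / τ ^ 2)) • f x - (-(gradient En x))‖ ^ 2 * q x)
      = fun x : EuclideanSpace ℝ (Fin n) => (c ^ 2 / τ ^ 4) * (‖f x‖ ^ 2 * q x) +
          ((2 * c ^ 2 / τ ^ 2) * (⟪f x, g x⟫_ℝ * q x) + c ^ 2 * (‖g x‖ ^ 2 * q x)) := by
    funext x
    have hgx : gradient En x = (-c) • g x := by
      rw [hgE x, smul_smul, show (-c) * (-c⁻¹) = 1 from by field_simp, one_smul]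
    rw [hgx]
    have hcollect : (-(c / τ ^ 2)) • f x - (-((-c) • g x))
        = (-c) • ((τ ^ 2)⁻¹ • f x + g x) := by
      rw [smul_add, smul_smul, show (-c) * (τ ^ 2)⁻¹ = -(c / τ ^ 2) from by ring]
      simp [neg_smul, sub_eq_add_neg]
    rw [hcollect]
    have e1 : ‖(-c : ℝ) • ((τ ^ 2)⁻¹ • f x + g x)‖ ^ 2
        = c ^ 2 * ‖(τ ^ 2)⁻¹ • f x + g x‖ ^ 2 := by
      rw [norm_smul, Real.norm_eq_abs, mul_pow, abs_neg, sq_abs]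
    have e2 : ‖(τ ^ 2)⁻¹ • f x + g x‖ ^ 2
        = ((τ ^ 2)⁻¹) ^ 2 * ‖f x‖ ^ 2 + 2 * (τ ^ 2)⁻¹ * ⟪f x, g x⟫_ℝ + ‖g x‖ ^ 2 := by
      rw [norm_add_sq_real, norm_smul, real_inner_smul_left, Real.norm_eq_abs, mul_pow, sq_abs]
      ring
    rw [e1, e2]
    field_simp
    ring
  have hR : (∫ x, ‖(-(c / τ ^ 2)) • f x - (-(gradient En x))‖ ^ 2 * q x)
      = (c ^ 2 / τ ^ 4) * (∫ x, ‖f x‖ ^ 2 * q x) +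
        ((2 * c ^ 2 / τ ^ 2) * (∫ x, ⟪f x, g x⟫_ℝ * q x) +
          c ^ 2 * (∫ x, ‖g x‖ ^ 2 * q x)) := by
    have iA : Integrable (fun x => (c ^ 2 / τ ^ 4) * (‖f x‖ ^ 2 * q x)) := hfq.const_mul _
    have iJ : Integrable (fun x => (2 * c ^ 2 / τ ^ 2) * (⟪f x, g x⟫_ℝ * q x)) :=
      i_cross_q.const_mul _
    have iK : Integrable (fun x => c ^ 2 * (‖g x‖ ^ 2 * q x)) := hfin2.const_mul _
    have iJK : Integrable (fun x => (2 * c ^ 2 / τ ^ 2) * (⟪f x, g x⟫_ℝ * q x) +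
        c ^ 2 * (‖g x‖ ^ 2 * q x)) := iJ.add iK
    rw [hRfun, integral_add iA iJK, integral_add iJ iK,
      integral_const_mul, integral_const_mul, integral_const_mul]
  rw [hL, hR]
  generalize (∫ x, ‖f x‖ ^ 2 * q x) = A
  generalize (∫ x, ⟪f x, g x⟫_ℝ * q x) = J
  generalize (∫ x, ‖g x‖ ^ 2 * q x) = K
  generalize (∫ z : EuclideanSpace ℝ (Fin n) × EuclideanSpace ℝ (Fin n), ‖(τ ^ 2)⁻¹ • (z.2 - z.1)‖ ^ 2 * pj z.1 z.2) = B
  field_simp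
  ring
end

section
/- (Theorem 3: Noise type transformation.) Let M ≤ K be positive integers and split ℝᴷ = ℝᴹ × ℝ^{K−M}, writing a point as x = (x⁽¹⁾, x⁽²⁾). Let f : ℝᴷ → ℝᴹ be differentiable at a point x = (x₁, x₂) with total derivative J = (J⁽¹⁾, J⁽²⁾), where J⁽¹⁾ : ℝᴹ → ℝᴹ and J⁽²⁾ : ℝ^{K−M} → ℝᴹ are its restrictions to the two factors. Let A : ℝᴹ → ℝ^{K−M} satisfy A(x₁) = x₂ and be differentiable at x₁ with derivative J_A, and suppose B := J⁽¹⁾ + J⁽²⁾ ∘ J_A is invertible. Define the constrained displacement Δx(u) = (u − x₁, A(u) − x₂) ∈ ℝᴷ, the induced noise Δd(u) = f(u, A(u)) − f(x₁, x₂) ∈ ℝᴹ, and the linear map C = (id_{ℝᴹ}, J_A) ∘ B⁻¹ : ℝᴹ → ℝᴷ. Then Δx(u) − C(Δd(u)) = o(‖Δd(u)‖) as u → x₁; that is, the coordinate change is asymptotically linear in the noise: Δx = C·Δd + o(Δd). -/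
open Asymptotics Filter Topology

/-- **Theorem 3: Noise type transformation.**
Split `ℝᴷ = ℝᴹ × ℝ^{K−M}`.  Let `f : ℝᴷ → ℝᴹ` be differentiable at `x = (x₁, x₂)` with
total derivative `J`, having restrictions `J⁽¹⁾ = J ∘ inl` and `J⁽²⁾ = J ∘ inr`.  Let
`A : ℝᴹ → ℝ^{K−M}` satisfy `A(x₁) = x₂`, be differentiable at `x₁` with derivative `J_A`,
and assume `B = J⁽¹⁾ + J⁽²⁾ ∘ J_A` is invertible (with two-sided inverse `Binv`).  With
`C = (id, J_A) ∘ B⁻¹`, the constrained displacement `Δx(u) = (u − x₁, A(u) − x₂)` and the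
induced noise `Δd(u) = f(u, A(u)) − f(x₁, x₂)` satisfy
`Δx(u) − C(Δd(u)) = o(‖Δd(u)‖)` as `u → x₁`. -/
theorem noise_type_transformation (M K : ℕ) (hM : 0 < M) (hK : 0 < K) (hMK : M ≤ K)
    (f : EuclideanSpace ℝ (Fin M) × EuclideanSpace ℝ (Fin (K - M)) →
      EuclideanSpace ℝ (Fin M))
    (x₁ : EuclideanSpace ℝ (Fin M)) (x₂ : EuclideanSpace ℝ (Fin (K - M)))
    (J : EuclideanSpace ℝ (Fin M) × EuclideanSpace ℝ (Fin (K - M)) →L[ℝ]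
      EuclideanSpace ℝ (Fin M))
    (hf : HasFDerivAt f J (x₁, x₂))
    (A : EuclideanSpace ℝ (Fin M) → EuclideanSpace ℝ (Fin (K - M)))
    (J_A : EuclideanSpace ℝ (Fin M) →L[ℝ] EuclideanSpace ℝ (Fin (K - M)))
    (hA : HasFDerivAt A J_A x₁) (hAx : A x₁ = x₂)
    (B : EuclideanSpace ℝ (Fin M) →L[ℝ] EuclideanSpace ℝ (Fin M))
    (hB : B = J.comp (ContinuousLinearMap.inl ℝ (EuclideanSpace ℝ (Fin M))
        (EuclideanSpace ℝ (Fin (K - M)))) +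
      (J.comp (ContinuousLinearMap.inr ℝ (EuclideanSpace ℝ (Fin M))
        (EuclideanSpace ℝ (Fin (K - M))))).comp J_A)
    (Binv : EuclideanSpace ℝ (Fin M) →L[ℝ] EuclideanSpace ℝ (Fin M))
    (hBinv_left : Binv.comp B = ContinuousLinearMap.id ℝ (EuclideanSpace ℝ (Fin M)))
    (hBinv_right : B.comp Binv = ContinuousLinearMap.id ℝ (EuclideanSpace ℝ (Fin M)))
    (C : EuclideanSpace ℝ (Fin M) →L[ℝ]
      EuclideanSpace ℝ (Fin M) × EuclideanSpace ℝ (Fin (K - M)))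
    (hC : C = ((ContinuousLinearMap.id ℝ (EuclideanSpace ℝ (Fin M))).prod J_A).comp Binv) :
    (fun u => ((u - x₁, A u - x₂) :
        EuclideanSpace ℝ (Fin M) × EuclideanSpace ℝ (Fin (K - M))) -
      C (f (u, A u) - f (x₁, x₂)))
      =o[𝓝 x₁] (fun u => f (u, A u) - f (x₁, x₂)) := by
  classical
  set D := (ContinuousLinearMap.id ℝ (EuclideanSpace ℝ (Fin M))).prod J_A with hDdef
  have hBeq : J.comp D = B := by
    rw [hB]
    refine ContinuousLinearMap.ext fun u => ?_
    show J (u, J_A u) = J (u, 0) + J (0, J_A u)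
    rw [← J.map_add]
    simp
  have hDeriv : HasFDerivAt (fun u => (u, A u)) D x₁ := HasFDerivAt.prodMk (hasFDerivAt_id x₁) hA
  have hf' : HasFDerivAt f J (x₁, A x₁) := by rw [hAx]; exact hf
  have hg : HasFDerivAt (fun u => f (u, A u)) B x₁ := by
    have := hf'.comp x₁ hDeriv
    rwa [hBeq] at this
  have hgx : f (x₁, A x₁) = f (x₁, x₂) := by rw [hAx]
  have hlo : (fun u => (f (u, A u) - f (x₁, x₂)) - B (u - x₁)) =o[𝓝 x₁]
      fun u => u - x₁ := by
    have := hg.isLittleO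
    simpa [hgx] using this
  have halo : (fun u => A u - x₂ - J_A (u - x₁)) =o[𝓝 x₁] fun u => u - x₁ := by
    have := hA.isLittleO
    simpa [hAx] using this
  have hBL : ∀ v, Binv (B v) = v := fun v => by
    rw [← ContinuousLinearMap.comp_apply, hBinv_left]; rfl
  have hBR : ∀ v, B (Binv v) = v := fun v => by
    rw [← ContinuousLinearMap.comp_apply, hBinv_right]; rfl
  let Beq := ContinuousLinearEquiv.equivOfInverse B Binv hBL hBR
  have hBO : (fun u => u - x₁) =O[𝓝 x₁] fun u => f (u, A u) - f (x₁, x₂) := by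
    have hE : (fun u => u - x₁) =O[𝓝 x₁] fun u => B (u - x₁) := Beq.isBigO_sub_rev (𝓝 x₁) x₁
    have := (hE.trans ((hg.isLittleO.trans_isBigO hE).right_isBigO_add)).congr_right
      (fun u => sub_add_cancel _ _)
    simpa [hgx] using this
  have key : ∀ u, ((u - x₁, A u - x₂) :
        EuclideanSpace ℝ (Fin M) × EuclideanSpace ℝ (Fin (K - M)))
        - C (f (u, A u) - f (x₁, x₂))
      = ((0, A u - x₂ - J_A (u - x₁)) :
        EuclideanSpace ℝ (Fin M) × EuclideanSpace ℝ (Fin (K - M)))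
        - D (Binv ((f (u, A u) - f (x₁, x₂)) - B (u - x₁))) := by
    intro u
    rw [hC]
    have h1 : Binv ((f (u, A u) - f (x₁, x₂)) - B (u - x₁))
        = Binv (f (u, A u) - f (x₁, x₂)) - (u - x₁) := by
      rw [map_sub, hBL]
    rw [h1]
    simp only [hDdef, ContinuousLinearMap.comp_apply, ContinuousLinearMap.prod_apply,
      ContinuousLinearMap.id_apply, map_sub]
    apply Prod.ext <;>
      simp only [Prod.fst_sub, Prod.snd_sub, Prod.mk.injEq] <;> abel
  have e1 : (fun u => ((0, A u - x₂ - J_A (u - x₁)) :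
        EuclideanSpace ℝ (Fin M) × EuclideanSpace ℝ (Fin (K - M)))) =o[𝓝 x₁]
      fun u => u - x₁ := by
    have hinr := (ContinuousLinearMap.inr ℝ (EuclideanSpace ℝ (Fin M))
      (EuclideanSpace ℝ (Fin (K - M)))).isBigO_comp
      (fun u => A u - x₂ - J_A (u - x₁)) (𝓝 x₁)
    exact (hinr.trans_isLittleO halo).congr_left (fun u => by simp)
  have e2 : (fun u => D (Binv ((f (u, A u) - f (x₁, x₂)) - B (u - x₁)))) =o[𝓝 x₁]
      fun u => u - x₁ := by
    have := (D.comp Binv).isBigO_comp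
      (fun u => (f (u, A u) - f (x₁, x₂)) - B (u - x₁)) (𝓝 x₁)
    exact (this.congr_left (fun u => by simp)).trans_isLittleO hlo
  have final := (e1.sub e2).congr_left (fun u => (key u).symm)
  exact final.trans_isBigO hBO
end
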